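/- arXiv:0806.0440 — 5 statements merged into one kernel-verified Lean document; each statement's English description precedes it below -/
import Mathlib

section
/- Let a = (a_1,…,a_n) be a non-decreasing sequence of positive integers and let S = {i ∈ [n−1] : a_{i+1} is odd}. Then I_a(−1) = 0 if a_1 is even, and I_a(−1) = (−1)^{a_1+a_2+⋯+a_n−n} · β_n(S) if a_1 is odd. -/
open Finset

/-- `b` is an `a`-parking function: all entries are positive and the increasing
rearrangement `b ∘ Tuple.sort b` satisfies `b'_i ≤ a_i` (here `a` is 1-indexed). -/
def IsAPF {n : ℕ} (a : ℕ → ℕ) (b : Fin n → ℕ) : Prop :=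
  (∀ i, 1 ≤ b i) ∧ ∀ i : Fin n, (b ∘ Tuple.sort b) i ≤ a ((i : ℕ) + 1)

/-- The value of the permutation `σ` of `[n]` at (0-indexed) position `i`, as a natural number. -/
def permVal {n : ℕ} (σ : Equiv.Perm (Fin n)) (i : ℕ) : ℕ :=
  if h : i < n then (σ ⟨i, h⟩ : ℕ) else 0

/-- The descent set of `σ`, as a subset of `[n-1] = {1, …, n-1}` (1-indexed positions):
`i` is a descent when `σ_i > σ_{i+1}`. -/
def descSet {n : ℕ} (σ : Equiv.Perm (Fin n)) : Finset ℕ :=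
  (Finset.Icc 1 (n - 1)).filter fun i => permVal σ i < permVal σ (i - 1)

/-- `betaN n S` is the number of permutations of `[n]` with descent set `S`. -/
def betaN (n : ℕ) (S : Finset ℕ) : ℕ :=
  (Finset.univ.filter fun σ : Equiv.Perm (Fin n) => descSet σ = S).card

open scoped Classical

/-- sign weight of one entry -/
def sgn (c : ℕ) : ℤ := (-1) ^ (c - 1)

/-- number of entries of `b` that are `≤ m` -/
def cnt {n : ℕ} (b : Fin n → ℕ) (m : ℕ) : ℕ := (Finset.univ.filter fun i => b i ≤ m).card

/-- count-characterization of parking functions -/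
def APF (a : ℕ → ℕ) (n : ℕ) (b : Fin n → ℕ) : Prop :=
  (∀ i, 1 ≤ b i) ∧ ∀ t, 1 ≤ t → t ≤ n → t ≤ cnt b (a t)

noncomputable def PF (a : ℕ → ℕ) (n : ℕ) : Finset (Fin n → ℕ) :=
  (Fintype.piFinset fun _ => Finset.Icc 1 (a n)).filter (APF a n)

noncomputable def Fval (a : ℕ → ℕ) (n : ℕ) : ℤ := ∑ b ∈ PF a n, ∏ i, sgn (b i)

lemma cnt_comp_perm {n : ℕ} (b : Fin n → ℕ) (σ : Equiv.Perm (Fin n)) (m : ℕ) :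
    cnt (b ∘ σ) m = cnt b m := by
  unfold cnt
  apply Finset.card_equiv σ
  intro i
  simp

lemma card_lt_fin {n t : ℕ} (h : t ≤ n) :
    (Finset.univ.filter fun i : Fin n => (i : ℕ) < t).card = t := by
  rcases eq_or_lt_of_le h with rfl | h
  · rw [Finset.filter_true_of_mem (fun i _ => i.isLt)]
    simp
  · have : (Finset.univ.filter fun i : Fin n => (i : ℕ) < t) = Finset.Iio ⟨t, h⟩ := by
      ext i
      simp [Fin.lt_def]
    rw [this, Fin.card_Iio]

lemma cnt_mono {n : ℕ} (b : Fin n → ℕ) {m m' : ℕ} (h : m ≤ m') : cnt b m ≤ cnt b m' := by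
  apply Finset.card_le_card
  apply Finset.monotone_filter_right
  intro i hi
  omega

lemma cnt_all {n : ℕ} (b : Fin n → ℕ) {m : ℕ} (h : n ≤ cnt b m) : ∀ i, b i ≤ m := by
  intro i
  have : (Finset.univ.filter fun i => b i ≤ m) = Finset.univ := by
    apply Finset.eq_of_subset_of_card_le (Finset.filter_subset _ _)
    simpa [cnt] using h
  have h2 : i ∈ Finset.univ.filter fun i => b i ≤ m := by rw [this]; exact Finset.mem_univ i
  exact (Finset.mem_filter.mp h2).2

lemma mono_char {n : ℕ} (a : ℕ → ℕ) (f : Fin n → ℕ) (hf : Monotone f) :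
    (∀ i : Fin n, f i ≤ a ((i : ℕ) + 1)) ↔ (∀ t, 1 ≤ t → t ≤ n → t ≤ cnt f (a t)) := by
  constructor
  · intro h t ht1 htn
    have hsub : (Finset.univ.filter fun i : Fin n => (i : ℕ) < t) ⊆
        (Finset.univ.filter fun i => f i ≤ a t) := by
      intro i hi
      simp only [Finset.mem_filter, Finset.mem_univ, true_and] at *
      have hi' : (i : ℕ) ≤ t - 1 := by omega
      have h1 : f i ≤ f ⟨t - 1, by omega⟩ := hf (by exact hi')
      have h2 : f ⟨t - 1, by omega⟩ ≤ a ((t-1) + 1) := h ⟨t - 1, by omega⟩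
      have : (t - 1) + 1 = t := by omega
      rw [this] at h2
      exact le_trans h1 h2
    have hcard : (Finset.univ.filter fun i : Fin n => (i : ℕ) < t).card = t :=
      card_lt_fin htn
    calc t = _ := hcard.symm
    _ ≤ _ := Finset.card_le_card hsub
  · intro h i
    set t := (i : ℕ) + 1 with ht
    have h1 : t ≤ cnt f (a t) := h t (by omega) (by omega)
    -- there is an index j ≥ i with f j ≤ a t
    have : ∃ j : Fin n, i ≤ j ∧ f j ≤ a t := by
      by_contra hc
      push_neg at hc
      have hsub : (Finset.univ.filter fun j => f j ≤ a t) ⊆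
          (Finset.univ.filter fun j : Fin n => (j : ℕ) < (i:ℕ)) := by
        intro j hj
        simp only [Finset.mem_filter, Finset.mem_univ, true_and] at *
        by_contra hji
        push_neg at hji
        exact absurd (hc j (by exact Fin.le_def.mpr hji)) (by simpa using hj)
      have hcard : (Finset.univ.filter fun j : Fin n => (j : ℕ) < (i:ℕ)).card = (i:ℕ) :=
        card_lt_fin (le_of_lt i.isLt)
      have := Finset.card_le_card hsub
      rw [hcard] at this
      unfold cnt at h1
      omega
    obtain ⟨j, hij, hj⟩ := this
    exact le_trans (hf hij) hj

lemma isAPF_iff {n : ℕ} (a : ℕ → ℕ) (b : Fin n → ℕ) : IsAPF a b ↔ APF a n b := by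
  unfold IsAPF APF
  have hs : Monotone (b ∘ (Tuple.sort b)) := Tuple.monotone_sort b
  constructor
  · rintro ⟨h1, h2⟩
    refine ⟨h1, ?_⟩
    intro t ht1 htn
    rw [← cnt_comp_perm b (Tuple.sort b)]
    exact (mono_char a _ hs).mp h2 t ht1 htn
  · rintro ⟨h1, h2⟩
    refine ⟨h1, ?_⟩
    apply (mono_char a _ hs).mpr
    intro t ht1 htn
    rw [cnt_comp_perm b (Tuple.sort b)]
    exact h2 t ht1 htn


  
lemma apf_le {n : ℕ} (a : ℕ → ℕ) (b : Fin n → ℕ) (hn : 1 ≤ n) (hb : APF a n b) :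
    ∀ i, b i ≤ a n :=
  cnt_all b (hb.2 n hn le_rfl)

lemma set_eq_PF (n : ℕ) (hn : 1 ≤ n) (a : ℕ → ℕ) :
    {b : Fin n → ℕ | IsAPF a b} = ↑(PF a n) := by
  ext b
  simp only [Set.mem_setOf_eq, Finset.coe_filter, PF, Finset.mem_filter,
    Fintype.mem_piFinset, Finset.mem_Icc]
  rw [isAPF_iff]
  constructor
  · intro h
    exact ⟨fun i => ⟨h.1 i, apf_le a b hn h i⟩, h⟩
  · exact fun h => h.2

lemma weight_eq {n : ℕ} (b : Fin n → ℕ) (hb : ∀ i, 1 ≤ b i) :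
    (-1 : ℤ) ^ ((∑ i, b i) - n) = ∏ i, sgn (b i) := by
  have hsum : ∑ i, b i = (∑ i, (b i - 1)) + n := by
    have : ∑ i : Fin n, b i = ∑ i : Fin n, ((b i - 1) + 1) := by
      apply Finset.sum_congr rfl
      intro i _
      have := hb i
      omega
    rw [this, Finset.sum_add_distrib]
    simp
  rw [hsum]
  simp only [Nat.add_sub_cancel, sgn]
  rw [Finset.prod_pow_eq_pow_sum]

lemma finsum_eq_Fval (n : ℕ) (hn : 1 ≤ n) (a : ℕ → ℕ) :
    ∑ᶠ b ∈ {b : Fin n → ℕ | IsAPF a b}, ((-1 : ℤ) ^ ((∑ i, b i) - n)) = Fval a n := by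
  rw [set_eq_PF n hn a, finsum_mem_coe_finset, Fval]
  apply Finset.sum_congr rfl
  intro b hb
  have hb' : APF a n b := (Finset.mem_filter.mp hb).2
  exact weight_eq b hb'.1

lemma geom1 (x : ℕ) : ∑ c ∈ Finset.Icc 1 x, sgn c = if Even x then 0 else 1 := by
  induction x with
  | zero => simp
  | succ x ih =>
    rw [Finset.sum_Icc_succ_top (by omega)]
    rw [ih]
    have : sgn (x + 1) = (-1) ^ x := by simp [sgn]
    rw [this]
    rcases Nat.even_or_odd x with h | h
    · simp [h, Nat.even_add_one, h.neg_one_pow]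
    · simp [h, Nat.even_add_one, Nat.not_even_iff_odd.mpr h, h.neg_one_pow]

lemma geom2 (t x : ℕ) (htx : t ≤ x) (hx : Even x) :
    ∑ c ∈ Finset.Ioc t x, sgn c = if Odd t then -1 else 0 := by
  have key : (∑ c ∈ Finset.Ioc 0 t, sgn c) + (∑ c ∈ Finset.Ioc t x, sgn c)
      = ∑ c ∈ Finset.Ioc 0 x, sgn c := Finset.sum_Ioc_consecutive _ (by omega) htx
  have e1 : Finset.Ioc 0 t = Finset.Icc 1 t := by rw [← Finset.Icc_add_one_left_eq_Ioc, zero_add]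
  have e2 : Finset.Ioc 0 x = Finset.Icc 1 x := by rw [← Finset.Icc_add_one_left_eq_Ioc, zero_add]
  rw [e1, e2, geom1, geom1] at key
  rcases Nat.even_or_odd t with h | h
  · simp [h, Nat.not_odd_iff_even.mpr h] at key ⊢
    simp [hx] at key
    omega
  · simp [h, Nat.not_even_iff_odd.mpr h] at key ⊢
    simp [hx] at key
    omega

lemma pi_sum (m : ℕ) (s : Finset ℕ) :
    ∑ b ∈ Fintype.piFinset (fun _ : Fin m => s), ∏ i, sgn (b i)
      = (∑ c ∈ s, sgn c) ^ m := by
  rw [← Finset.prod_univ_sum]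
  simp

lemma card_filter_orderIso {m j : ℕ} (T : Finset (Fin m)) (h : T.card = j) (P : Fin m → Prop)
    [DecidablePred P] :
    (Finset.univ.filter fun k : Fin j => P ((T.orderIsoOfFin h k : Fin m))).card
      = (T.filter P).card := by
  apply Finset.card_bij (fun k _ => ((T.orderIsoOfFin h k : Fin m)))
  · intro k hk
    simp only [Finset.mem_filter, Finset.mem_univ, true_and] at *
    exact ⟨(T.orderIsoOfFin h k).2, hk⟩
  · intro k₁ h₁ k₂ h₂ he
    have := (T.orderIsoOfFin h).injective (Subtype.ext he)
    exact this
  · intro i hi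
    simp only [Finset.mem_filter] at hi
    refine ⟨(T.orderIsoOfFin h).symm ⟨i, hi.1⟩, ?_, ?_⟩
    · simp only [Finset.mem_filter, Finset.mem_univ, true_and]
      rw [OrderIso.apply_symm_apply]
      exact hi.2
    · rw [OrderIso.apply_symm_apply]

lemma prod_orderIso {M : Type*} [CommMonoid M] {m j : ℕ} (T : Finset (Fin m)) (h : T.card = j)
    (f : Fin m → M) :
    ∏ k : Fin j, f ((T.orderIsoOfFin h k : Fin m)) = ∏ i ∈ T, f i := by
  rw [← Finset.prod_coe_sort T f]
  exact Equiv.prod_comp (T.orderIsoOfFin h).toEquiv (fun x => f ↑x)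

/-- the candidate set for the Goncharov index -/
noncomputable def jset (a : ℕ → ℕ) {m : ℕ} (b : Fin m → ℕ) : Finset ℕ :=
  (Finset.range (m + 1)).filter fun j => ∀ t, 1 ≤ t → t ≤ j → t ≤ cnt b (a t)

lemma jset_ne (a : ℕ → ℕ) {m : ℕ} (b : Fin m → ℕ) : (jset a b).Nonempty := by
  refine ⟨0, ?_⟩
  simp only [jset, Finset.mem_filter, Finset.mem_range]
  exact ⟨by omega, fun t h1 h2 => by omega⟩

/-- the Goncharov index of `b` -/
noncomputable def jdx (a : ℕ → ℕ) {m : ℕ} (b : Fin m → ℕ) : ℕ :=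
  (jset a b).max' (jset_ne a b)

lemma jdx_mem (a : ℕ → ℕ) {m : ℕ} (b : Fin m → ℕ) : jdx a b ∈ jset a b :=
  (jset a b).max'_mem (jset_ne a b)

lemma jdx_le (a : ℕ → ℕ) {m : ℕ} (b : Fin m → ℕ) : jdx a b ≤ m := by
  have := jdx_mem a b
  simp only [jset, Finset.mem_filter, Finset.mem_range] at this
  omega

lemma jdx_spec (a : ℕ → ℕ) {m : ℕ} (b : Fin m → ℕ) :
    ∀ t, 1 ≤ t → t ≤ jdx a b → t ≤ cnt b (a t) := by
  have := jdx_mem a b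
  simp only [jset, Finset.mem_filter, Finset.mem_range] at this
  exact this.2

lemma jdx_succ (a : ℕ → ℕ) {m : ℕ} (b : Fin m → ℕ) (h : jdx a b < m) :
    cnt b (a (jdx a b + 1)) ≤ jdx a b := by
  have hnot : jdx a b + 1 ∉ jset a b := by
    intro hmem
    have : jdx a b + 1 ≤ jdx a b := Finset.le_max' _ _ hmem
    omega
  simp only [jset, Finset.mem_filter, Finset.mem_range, not_and, not_forall] at hnot
  obtain ⟨t, h1, h2, h3⟩ := hnot (by omega)
  by_cases ht : t ≤ jdx a b
  · exact absurd (jdx_spec a b t h1 ht) h3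
  · have : t = jdx a b + 1 := by omega
    rw [this] at h3
    omega

lemma jdx_eq (a : ℕ → ℕ) {m : ℕ} (b : Fin m → ℕ) (j : ℕ) (hjm : j ≤ m)
    (h1 : ∀ t, 1 ≤ t → t ≤ j → t ≤ cnt b (a t))
    (h2 : j < m → cnt b (a (j + 1)) ≤ j) : jdx a b = j := by
  have hmem : j ∈ jset a b := by
    simp only [jset, Finset.mem_filter, Finset.mem_range]
    exact ⟨by omega, h1⟩
  have hge : j ≤ jdx a b := Finset.le_max' _ _ hmem
  by_contra hne
  have hlt : j < jdx a b := by omega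
  have hjm' : j < m := lt_of_lt_of_le hlt (jdx_le a b)
  have := jdx_spec a b (j + 1) (by omega) (by omega)
  have := h2 hjm'
  omega

lemma fiber_sum (a : ℕ → ℕ) (m x j : ℕ) (θ : ℕ) (hjm : j ≤ m)
    (hθx : θ ≤ x)
    (hatθ : ∀ t, 1 ≤ t → t ≤ j → a t ≤ θ)
    (hθj1 : j < m → θ = a (j + 1))
    (T : Finset (Fin m)) (hT : T.card = j) :
    ∑ b ∈ (Fintype.piFinset fun _ : Fin m => Finset.Icc 1 x).filter
        (fun b => jdx a b = j ∧ Finset.univ.filter (fun i => b i ≤ θ) = T),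
        ∏ i, sgn (b i)
      = (∑ p ∈ PF a j, ∏ k, sgn (p k)) *
        (∑ g ∈ Fintype.piFinset (fun _ : Fin (m - j) => Finset.Ioc (a (j + 1)) x),
          ∏ k, sgn (g k)) := by
  have hTc : Tᶜ.card = m - j := by rw [Finset.card_compl, hT]; simp
  set ι : Fin j → Fin m := fun k => (T.orderIsoOfFin hT k : Fin m) with hι
  set κ : Fin (m - j) → Fin m := fun k => (Tᶜ.orderIsoOfFin hTc k : Fin m) with hκ
  rw [Finset.sum_mul_sum, ← Finset.sum_product']
  -- the bijection
  apply Finset.sum_bij'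
    (i := fun b _ => ((fun k => b (ι k)), (fun k => b (κ k))))
    (j := fun pg _ => (fun i : Fin m =>
      if hi : i ∈ T then pg.1 ((T.orderIsoOfFin hT).symm ⟨i, hi⟩)
      else pg.2 ((Tᶜ.orderIsoOfFin hTc).symm ⟨i, Finset.mem_compl.mpr hi⟩)))
  -- forward membership
  · intro b hb
    simp only [Finset.mem_filter, Fintype.mem_piFinset, Finset.mem_Icc] at hb
    obtain ⟨hbx, hjdx, hfil⟩ := hb
    have hmemT : ∀ i, i ∈ T ↔ b i ≤ θ := by
      intro i
      rw [← hfil]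
      simp
    have hcnt : ∀ t, 1 ≤ t → t ≤ j → cnt (fun k => b (ι k)) (a t) = cnt b (a t) := by
      intro t h1 h2
      unfold cnt
      beta_reduce
      simp only [hι]
      rw [card_filter_orderIso T hT (fun i => b i ≤ a t), ← hfil, Finset.filter_filter]
      congr 1
      apply Finset.filter_congr
      intro i _
      constructor
      · exact fun h => h.2
      · exact fun h => ⟨le_trans h (hatθ t h1 h2), h⟩
    rw [Finset.mem_product]
    constructor
    · -- p-part in PF a j
      simp only [PF, Finset.mem_filter, Fintype.mem_piFinset, Finset.mem_Icc]
      have hAPF : APF a j (fun k => b (ι k)) := by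
        constructor
        · intro k; exact (hbx (ι k)).1
        · intro t h1 h2
          rw [hcnt t h1 h2]
          exact jdx_spec a b t h1 (by omega)
      refine ⟨?_, hAPF⟩
      intro k
      refine ⟨(hbx (ι k)).1, ?_⟩
      have hj1 : 1 ≤ j := by have := k.isLt; omega
      exact cnt_all (fun k => b (ι k)) (hAPF.2 j hj1 le_rfl) k
    · -- g-part
      simp only [Fintype.mem_piFinset, Finset.mem_Ioc]
      intro k
      have hjm' : j < m := by have := k.isLt; omega
      have hκm : κ k ∈ Tᶜ := (Tᶜ.orderIsoOfFin hTc k).2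
      have : ¬ (b (κ k) ≤ θ) := by
        rw [← hmemT]
        exact Finset.mem_compl.mp hκm
      rw [hθj1 hjm'] at this
      exact ⟨by omega, (hbx (κ k)).2⟩
  -- backward membership
  · rintro ⟨p, g⟩ hpg
    rw [Finset.mem_product] at hpg
    obtain ⟨hp, hg⟩ := hpg
    simp only [PF, Finset.mem_filter, Fintype.mem_piFinset, Finset.mem_Icc] at hp
    simp only [Fintype.mem_piFinset, Finset.mem_Ioc] at hg
    set b : Fin m → ℕ := fun i =>
      if hi : i ∈ T then p ((T.orderIsoOfFin hT).symm ⟨i, hi⟩)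
      else g ((Tᶜ.orderIsoOfFin hTc).symm ⟨i, Finset.mem_compl.mpr hi⟩) with hbdef
    have hbT : ∀ i (hi : i ∈ T), b i = p ((T.orderIsoOfFin hT).symm ⟨i, hi⟩) := by
      intro i hi; simp only [hbdef, dif_pos hi]
    have hbTc : ∀ i (hi : i ∉ T),
        b i = g ((Tᶜ.orderIsoOfFin hTc).symm ⟨i, Finset.mem_compl.mpr hi⟩) := by
      intro i hi; simp only [hbdef, dif_neg hi]
    have hbound : ∀ i, 1 ≤ b i ∧ b i ≤ x := by
      intro i
      by_cases hi : i ∈ T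
      · rw [hbT i hi]
        have hj1 : 1 ≤ j := by
          rw [← hT]
          exact Finset.card_pos.mpr ⟨i, hi⟩
        have h1 := (hp.1 ((T.orderIsoOfFin hT).symm ⟨i, hi⟩)).1
        have h2 := (hp.1 ((T.orderIsoOfFin hT).symm ⟨i, hi⟩)).2
        exact ⟨h1, le_trans h2 (le_trans (hatθ j hj1 le_rfl) hθx)⟩
      · rw [hbTc i hi]
        have h := hg ((Tᶜ.orderIsoOfFin hTc).symm ⟨i, Finset.mem_compl.mpr hi⟩)
        exact ⟨by omega, h.2⟩
    have hjm' : ∀ i, i ∉ T → j < m := by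
      intro i hi
      have : (m - j) ≠ 0 := by
        intro h0
        have : Tᶜ.card = 0 := by rw [hTc, h0]
        have : i ∈ Tᶜ := Finset.mem_compl.mpr hi
        rw [Finset.card_eq_zero.mp ‹Tᶜ.card = 0›] at this
        exact absurd this (Finset.notMem_empty i)
      omega
    have hfil : Finset.univ.filter (fun i => b i ≤ θ) = T := by
      ext i
      simp only [Finset.mem_filter, Finset.mem_univ, true_and]
      constructor
      · intro h
        by_contra hi
        rw [hbTc i hi] at h
        have := (hg ((Tᶜ.orderIsoOfFin hTc).symm ⟨i, Finset.mem_compl.mpr hi⟩)).1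
        rw [hθj1 (hjm' i hi)] at h
        omega
      · intro hi
        rw [hbT i hi]
        have hj1 : 1 ≤ j := by
          rw [← hT]
          exact Finset.card_pos.mpr ⟨i, hi⟩
        exact le_trans (hp.1 ((T.orderIsoOfFin hT).symm ⟨i, hi⟩)).2 (hatθ j hj1 le_rfl)
    have hcnt : ∀ t, 1 ≤ t → t ≤ j → cnt b (a t) = cnt p (a t) := by
      intro t h1 h2
      unfold cnt
      have e1 : (Finset.univ.filter fun i => b i ≤ a t) = T.filter (fun i => b i ≤ a t) := by
        ext i
        simp only [Finset.mem_filter, Finset.mem_univ, true_and]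
        constructor
        · intro h
          refine ⟨?_, h⟩
          rw [← hfil]
          simp only [Finset.mem_filter, Finset.mem_univ, true_and]
          exact le_trans h (hatθ t h1 h2)
        · exact fun h => h.2
      rw [e1, ← card_filter_orderIso T hT (fun i => b i ≤ a t)]
      apply Finset.card_nbij' id id
      all_goals intro k hk
      pick_goal 3
      · exact rfl
      pick_goal 3
      · exact rfl
      all_goals simp only [Finset.mem_coe, Finset.mem_filter, Finset.mem_univ, true_and, id] at *
      all_goals {
        have he : b ((T.orderIsoOfFin hT k : Fin m)) = p k := by
          rw [hbT _ (T.orderIsoOfFin hT k).2]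
          congr 1
          have h3 : (⟨((T.orderIsoOfFin hT) k : Fin m), (T.orderIsoOfFin hT k).2⟩ :
              {y // y ∈ T}) = (T.orderIsoOfFin hT) k := rfl
          rw [h3, OrderIso.symm_apply_apply]
        simp only [hι] at *
        omega }
    have hjdx : jdx a b = j := by
      apply jdx_eq a b j hjm
      · intro t h1 h2
        rw [hcnt t h1 h2]
        exact hp.2.2 t h1 h2
      · intro hlt
        have hsub : (Finset.univ.filter fun i => b i ≤ a (j + 1)) ⊆ T := by
          intro i hi
          simp only [Finset.mem_filter, Finset.mem_univ, true_and] at hi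
          by_contra hiT
          rw [hbTc i hiT] at hi
          have := (hg ((Tᶜ.orderIsoOfFin hTc).symm ⟨i, Finset.mem_compl.mpr hiT⟩)).1
          omega
        calc cnt b (a (j+1)) ≤ T.card := Finset.card_le_card hsub
        _ = j := hT
    simp only [Finset.mem_filter, Fintype.mem_piFinset, Finset.mem_Icc]
    exact ⟨fun i => hbound i, hjdx, hfil⟩
  -- left inverse
  · intro b hb
    funext i
    by_cases hi : i ∈ T
    · simp only [dif_pos hi]
      congr 1
      have : (T.orderIsoOfFin hT) ((T.orderIsoOfFin hT).symm ⟨i, hi⟩) = ⟨i, hi⟩ :=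
        OrderIso.apply_symm_apply _ _
      rw [hι]
      simp only
      rw [this]
    · simp only [dif_neg hi]
      congr 1
      have : (Tᶜ.orderIsoOfFin hTc) ((Tᶜ.orderIsoOfFin hTc).symm ⟨i, Finset.mem_compl.mpr hi⟩)
          = ⟨i, Finset.mem_compl.mpr hi⟩ := OrderIso.apply_symm_apply _ _
      rw [hκ]
      simp only
      rw [this]
  -- right inverse
  · rintro ⟨p, g⟩ hpg
    have h1 : ∀ k, (ι k) ∈ T := fun k => (T.orderIsoOfFin hT k).2
    have h2 : ∀ k, (κ k) ∈ Tᶜ := fun k => (Tᶜ.orderIsoOfFin hTc k).2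
    refine Prod.ext ?_ ?_
    · funext k
      simp only [dif_pos (h1 k)]
      congr 1
      have : (⟨ι k, h1 k⟩ : {y // y ∈ T}) = (T.orderIsoOfFin hT) k := rfl
      rw [this, OrderIso.symm_apply_apply]
    · funext k
      have hk : κ k ∉ T := Finset.mem_compl.mp (h2 k)
      simp only [dif_neg hk]
      congr 1
      have : (⟨κ k, Finset.mem_compl.mpr hk⟩ : {y // y ∈ Tᶜ}) = (Tᶜ.orderIsoOfFin hTc) k := rfl
      rw [this, OrderIso.symm_apply_apply]
  -- weights agree
  · intro b hb
    simp only
    rw [prod_orderIso T hT (fun i => sgn (b i)), prod_orderIso Tᶜ hTc (fun i => sgn (b i)),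
      Finset.prod_mul_prod_compl]

lemma class_sum (a : ℕ → ℕ) (n m : ℕ) (hm1 : 1 ≤ m) (hmn : m ≤ n)
    (hmono : ∀ i j, 1 ≤ i → i ≤ j → j ≤ n → a i ≤ a j)
    (j : ℕ) (hjm : j ≤ m) :
    ∑ b ∈ (Fintype.piFinset fun _ : Fin m => Finset.Icc 1 (2 * a m)).filter
        (fun b => jdx a b = j), ∏ i, sgn (b i)
      = (m.choose j : ℤ) * ((∑ p ∈ PF a j, ∏ k, sgn (p k)) *
          (∑ g ∈ Fintype.piFinset (fun _ : Fin (m - j) => Finset.Ioc (a (j + 1)) (2 * a m)),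
            ∏ k, sgn (g k))) := by
  set x := 2 * a m with hxdef
  set θ := if j = m then x else a (j + 1) with hθdef
  have hθj1 : j < m → θ = a (j + 1) := by
    intro h; rw [hθdef, if_neg (by omega)]
  have hθx : θ ≤ x := by
    by_cases h : j = m
    · rw [hθdef, if_pos h]
    · rw [hθj1 (by omega)]
      have := hmono (j + 1) m (by omega) (by omega) hmn
      omega
  have hatθ : ∀ t, 1 ≤ t → t ≤ j → a t ≤ θ := by
    intro t h1 h2
    by_cases h : j = m
    · rw [hθdef, if_pos h]
      have := hmono t m h1 (by omega) hmn
      omega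
    · rw [hθj1 (by omega)]
      exact hmono t (j + 1) h1 (by omega) (by omega)
  have hmaps : ∀ b ∈ (Fintype.piFinset fun _ : Fin m => Finset.Icc 1 x).filter
      (fun b => jdx a b = j),
      (Finset.univ.filter fun i => b i ≤ θ) ∈ Finset.powersetCard j Finset.univ := by
    intro b hb
    simp only [Finset.mem_filter, Fintype.mem_piFinset, Finset.mem_Icc] at hb
    obtain ⟨hbx, hjdx⟩ := hb
    rw [Finset.mem_powersetCard_univ]
    by_cases h : j = m
    · rw [hθdef, if_pos h, Finset.filter_true_of_mem (fun i _ => (hbx i).2)]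
      simp [h]
    · rw [hθj1 (by omega)]
      have hle : cnt b (a (j + 1)) ≤ j := by
        have := jdx_succ a b (by rw [hjdx]; omega)
        rw [hjdx] at this
        exact this
      have hge : j ≤ cnt b (a (j + 1)) := by
        rcases Nat.eq_zero_or_pos j with h0 | h0
        · omega
        · have h1 : j ≤ cnt b (a j) := jdx_spec a b j h0 (by omega)
          have h2 : a j ≤ a (j + 1) := hmono j (j + 1) h0 (by omega) (by omega)
          exact le_trans h1 (cnt_mono b h2)
      have : cnt b (a (j + 1)) = j := by omega
      exact this
  rw [← Finset.sum_fiberwise_of_maps_to hmaps (fun b => ∏ i, sgn (b i))]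
  have hinner : ∀ T ∈ Finset.powersetCard j (Finset.univ : Finset (Fin m)),
      ∑ b ∈ ((Fintype.piFinset fun _ : Fin m => Finset.Icc 1 x).filter
          (fun b => jdx a b = j)).filter
          (fun b => (Finset.univ.filter fun i => b i ≤ θ) = T), ∏ i, sgn (b i)
        = (∑ p ∈ PF a j, ∏ k, sgn (p k)) *
          (∑ g ∈ Fintype.piFinset (fun _ : Fin (m - j) => Finset.Ioc (a (j + 1)) x),
            ∏ k, sgn (g k)) := by
    intro T hTmem
    rw [Finset.filter_filter]
    exact fiber_sum a m x j θ hjm hθx hatθ hθj1 T (Finset.mem_powersetCard_univ.mp hTmem)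
  rw [Finset.sum_congr rfl hinner, Finset.sum_const, Finset.card_powersetCard,
    Finset.card_univ, Fintype.card_fin, nsmul_eq_mul]

lemma Fval_rec (a : ℕ → ℕ) (n m : ℕ) (hm1 : 1 ≤ m) (hmn : m ≤ n)
    (hmono : ∀ i j, 1 ≤ i → i ≤ j → j ≤ n → a i ≤ a j) :
    Fval a m = ∑ j ∈ (Finset.range m).filter (fun j => Odd (a (j + 1))),
      (-1 : ℤ) ^ (m - j + 1) * (m.choose j) * Fval a j := by
  set x := 2 * a m with hxdef
  have hxeven : Even x := even_two_mul _
  have hcube : ∑ b ∈ (Fintype.piFinset fun _ : Fin m => Finset.Icc 1 x),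
      ∏ i, sgn (b i) = 0 := by
    rw [pi_sum, geom1, if_pos hxeven, zero_pow (Nat.one_le_iff_ne_zero.mp hm1)]
  have hmaps : ∀ b ∈ (Fintype.piFinset fun _ : Fin m => Finset.Icc 1 x),
      jdx a b ∈ Finset.range (m + 1) := by
    intro b _
    simp only [Finset.mem_range]
    exact Nat.lt_succ_of_le (jdx_le a b)
  rw [← Finset.sum_fiberwise_of_maps_to hmaps (fun b => ∏ i, sgn (b i))] at hcube
  have hterm : ∀ j ∈ Finset.range (m + 1),
      ∑ b ∈ (Fintype.piFinset fun _ : Fin m => Finset.Icc 1 x).filter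
          (fun b => jdx a b = j), ∏ i, sgn (b i)
        = (m.choose j : ℤ) * ((∑ p ∈ PF a j, ∏ k, sgn (p k)) *
            (∑ g ∈ Fintype.piFinset (fun _ : Fin (m - j) => Finset.Ioc (a (j + 1)) x),
              ∏ k, sgn (g k))) := by
    intro j hj
    simp only [Finset.mem_range] at hj
    exact class_sum a n m hm1 hmn hmono j (Nat.lt_succ_iff.mp hj)
  rw [Finset.sum_congr rfl hterm, Finset.sum_range_succ] at hcube
  -- the j = m term is Fval a m
  have hlast : (m.choose m : ℤ) * ((∑ p ∈ PF a m, ∏ k, sgn (p k)) *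
      (∑ g ∈ Fintype.piFinset (fun _ : Fin (m - m) => Finset.Ioc (a (m + 1)) x),
        ∏ k, sgn (g k))) = Fval a m := by
    rw [Nat.choose_self, Nat.sub_self]
    rw [pi_sum, pow_zero, Nat.cast_one, one_mul, mul_one, Fval]
  rw [hlast] at hcube
  have hterm2 : ∀ j ∈ Finset.range m,
      (m.choose j : ℤ) * ((∑ p ∈ PF a j, ∏ k, sgn (p k)) *
          (∑ g ∈ Fintype.piFinset (fun _ : Fin (m - j) => Finset.Ioc (a (j + 1)) x),
            ∏ k, sgn (g k)))
        = if Odd (a (j + 1)) then (-1 : ℤ) ^ (m - j) * (m.choose j) * Fval a j else 0 := by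
    intro j hj
    clear hcube hterm hlast hmaps
    simp only [Finset.mem_range] at hj
    have hax : a (j + 1) ≤ x := by
      have := hmono (j + 1) m (by omega) (by omega) hmn
      omega
    rw [pi_sum, geom2 _ _ hax hxeven]
    by_cases hodd : Odd (a (j + 1))
    · rw [if_pos hodd, if_pos hodd]
      rw [show (Fval a j) = ∑ p ∈ PF a j, ∏ k, sgn (p k) from rfl]
      ring_nf
    · rw [if_neg hodd, if_neg hodd, zero_pow (Nat.sub_ne_zero_of_lt hj), mul_zero, mul_zero]
  rw [Finset.sum_congr rfl hterm2, ← Finset.sum_filter] at hcube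
  have hfin : Fval a m = - ∑ j ∈ (Finset.range m).filter (fun j => Odd (a (j + 1))),
      (-1 : ℤ) ^ (m - j) * (m.choose j) * Fval a j := by linarith
  rw [hfin, ← Finset.sum_neg_distrib]
  apply Finset.sum_congr rfl
  intro j hj
  rw [pow_succ]
  ring

lemma descSet_subset {m : ℕ} (σ : Equiv.Perm (Fin m)) : descSet σ ⊆ Finset.Icc 1 (m - 1) :=
  Finset.filter_subset _ _

lemma mem_descSet {m : ℕ} (σ : Equiv.Perm (Fin m)) (i : ℕ) (h1 : 1 ≤ i) (hi : i < m) :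
    i ∈ descSet σ ↔ (σ ⟨i, hi⟩ : ℕ) < (σ ⟨i - 1, by omega⟩ : ℕ) := by
  unfold descSet permVal
  rw [Finset.mem_filter, dif_pos hi, dif_pos (show i - 1 < m by omega)]
  constructor
  · exact fun h => h.2
  · intro h
    exact ⟨Finset.mem_Icc.mpr ⟨h1, by omega⟩, h⟩

lemma strictMono_of_succ {N : ℕ} {α : Type*} [Preorder α] (f : Fin N → α)
    (h : ∀ i : ℕ, (hi : i + 1 < N) → f ⟨i, by omega⟩ < f ⟨i + 1, hi⟩) : StrictMono f := by
  have H : ∀ d (k : ℕ) (h1 : k + d < N), 1 ≤ d → f ⟨k, by omega⟩ < f ⟨k + d, h1⟩ := by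
    intro d
    induction d with
    | zero => omega
    | succ d ih =>
      intro k h1 _
      rcases Nat.eq_zero_or_pos d with h0 | h0
      · subst h0
        exact h k h1
      · calc f ⟨k, by omega⟩ < f ⟨k + d, by omega⟩ := ih k (by omega) h0
        _ < f ⟨k + d + 1, by omega⟩ := h (k + d) (by omega)
  intro k l hkl
  have hkl' : (k : ℕ) < (l : ℕ) := hkl
  have := H ((l : ℕ) - (k : ℕ)) (k : ℕ) (by omega) (by omega)
  have he1 : (⟨(k : ℕ), by omega⟩ : Fin N) = k := by ext; rfl
  have he2 : (⟨(k : ℕ) + ((l : ℕ) - (k : ℕ)), by omega⟩ : Fin N) = l := by ext; simp; omega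
  rwa [he1, he2] at this

lemma isoV_lt {m k : ℕ} (W : Finset (Fin m)) (hW : W.card = k) (u v : Fin k) :
    (((W.orderIsoOfFin hW u) : Fin m) : ℕ) < (((W.orderIsoOfFin hW v) : Fin m) : ℕ)
      ↔ (u : ℕ) < (v : ℕ) := by
  rw [← Fin.lt_def, Subtype.coe_lt_coe, OrderIso.lt_iff_lt, Fin.lt_def]

lemma isoV_symm_lt {m k : ℕ} (W : Finset (Fin m)) (hW : W.card = k) (u v : {x // x ∈ W}) :
    (((W.orderIsoOfFin hW).symm u : Fin k) : ℕ) < (((W.orderIsoOfFin hW).symm v : Fin k) : ℕ)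
      ↔ ((u : Fin m) : ℕ) < ((v : Fin m) : ℕ) := by
  rw [← Fin.lt_def, ← Fin.lt_def, OrderIso.lt_iff_lt, Subtype.coe_lt_coe]

lemma fiber_card (m j : ℕ) (hjm : j ≤ m) (S : Finset ℕ) (hS : ∀ s ∈ S, 1 ≤ s ∧ s + 1 ≤ j)
    (V : Finset (Fin m)) (hV : V.card = j) :
    ((Finset.univ.filter fun σ : Equiv.Perm (Fin m) => descSet σ \ {j} = S ∧
        (Finset.univ : Finset (Fin j)).image (fun k => σ (Fin.castLE hjm k)) = V)).card
      = betaN j S := by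
  have hVc : Vᶜ.card = m - j := by rw [Finset.card_compl, hV]; simp
  have hcast_inj : Function.Injective (Fin.castLE hjm) := by
    intro k1 k2 h
    have h2 := congrArg Fin.val h
    exact Fin.ext h2
  unfold betaN
  symm
  set bf : Equiv.Perm (Fin j) → Fin m → Fin m := fun τ i =>
    if h : (i : ℕ) < j then (V.orderIsoOfFin hV (τ ⟨(i : ℕ), h⟩) : Fin m)
    else (Vᶜ.orderIsoOfFin hVc ⟨(i : ℕ) - j, by omega⟩ : Fin m) with hbf
  have hbf_lt : ∀ τ (i : Fin m) (h : (i : ℕ) < j),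
      bf τ i = (V.orderIsoOfFin hV (τ ⟨(i : ℕ), h⟩) : Fin m) := by
    intro τ i h; simp only [hbf, dif_pos h]
  have hbf_ge : ∀ τ (i : Fin m) (h : ¬ ((i : ℕ) < j)),
      bf τ i = (Vᶜ.orderIsoOfFin hVc ⟨(i : ℕ) - j, by omega⟩ : Fin m) := by
    intro τ i h; simp only [hbf, dif_neg h]
  have hbf_bij : ∀ τ, Function.Bijective (bf τ) := by
    intro τ
    rw [← Finite.injective_iff_bijective]
    intro i1 i2 he
    by_cases h1 : (i1 : ℕ) < j <;> by_cases h2 : (i2 : ℕ) < j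
    · rw [hbf_lt τ i1 h1, hbf_lt τ i2 h2] at he
      have h3 := (V.orderIsoOfFin hV).injective (Subtype.coe_injective he)
      have h4 := τ.injective h3
      have h5 := congrArg Fin.val h4
      exact Fin.ext h5
    · rw [hbf_lt τ i1 h1, hbf_ge τ i2 h2] at he
      have hm1 : (V.orderIsoOfFin hV (τ ⟨(i1 : ℕ), h1⟩) : Fin m) ∈ V :=
        (V.orderIsoOfFin hV (τ ⟨(i1 : ℕ), h1⟩)).2
      have hm2 : (Vᶜ.orderIsoOfFin hVc ⟨(i2 : ℕ) - j, by omega⟩ : Fin m) ∈ Vᶜ :=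
        (Vᶜ.orderIsoOfFin hVc ⟨(i2 : ℕ) - j, by omega⟩).2
      rw [he] at hm1
      exact absurd hm1 (Finset.mem_compl.mp hm2)
    · rw [hbf_ge τ i1 h1, hbf_lt τ i2 h2] at he
      have hm1 : (Vᶜ.orderIsoOfFin hVc ⟨(i1 : ℕ) - j, by omega⟩ : Fin m) ∈ Vᶜ :=
        (Vᶜ.orderIsoOfFin hVc ⟨(i1 : ℕ) - j, by omega⟩).2
      have hm2 : (V.orderIsoOfFin hV (τ ⟨(i2 : ℕ), h2⟩) : Fin m) ∈ V :=
        (V.orderIsoOfFin hV (τ ⟨(i2 : ℕ), h2⟩)).2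
      rw [he] at hm1
      exact absurd hm2 (Finset.mem_compl.mp hm1)
    · rw [hbf_ge τ i1 h1, hbf_ge τ i2 h2] at he
      have h3 := (Vᶜ.orderIsoOfFin hVc).injective (Subtype.coe_injective he)
      have h4 : (i1 : ℕ) - j = (i2 : ℕ) - j := congrArg Fin.val h3
      exact Fin.ext (by omega)
  apply Finset.card_bij (fun τ _ => Equiv.ofBijective (bf τ) (hbf_bij τ))
  · -- maps to
    intro τ hτ
    simp only [Finset.mem_filter, Finset.mem_univ, true_and] at hτ ⊢
    have happ : ∀ i : Fin m, (Equiv.ofBijective (bf τ) (hbf_bij τ)) i = bf τ i :=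
      fun i => Equiv.ofBijective_apply _ _ i
    constructor
    · -- descent set condition
      ext i
      rw [Finset.mem_sdiff, Finset.mem_singleton]
      constructor
      · rintro ⟨hid, hij⟩
        have hiIcc := descSet_subset _ hid
        rw [Finset.mem_Icc] at hiIcc
        have hi1 : 1 ≤ i := hiIcc.1
        have him : i < m := by omega
        rw [mem_descSet _ i hi1 him] at hid
        rw [happ, happ] at hid
        by_cases hij' : i < j
        · rw [hbf_lt τ ⟨i, him⟩ hij',
            hbf_lt τ ⟨i - 1, by omega⟩ (show i - 1 < j by omega)] at hid
          rw [← hτ, mem_descSet τ i hi1 (by omega)]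
          exact (isoV_lt V hV _ _).mp hid
        · exfalso
          have hgt : j < i := by omega
          rw [hbf_ge τ ⟨i, him⟩ (show ¬ (i < j) by omega),
            hbf_ge τ ⟨i - 1, by omega⟩ (show ¬ (i - 1 < j) by omega)] at hid
          have h5 := (isoV_lt Vᶜ hVc _ _).mp hid
          have h6 : i - j < i - 1 - j := h5
          omega
      · intro hiS
        obtain ⟨hi1, hij⟩ := hS i hiS
        have him : i < m := by omega
        refine ⟨?_, by omega⟩
        rw [mem_descSet _ i hi1 him, happ, happ,
          hbf_lt τ ⟨i, him⟩ (show i < j by omega),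
          hbf_lt τ ⟨i - 1, by omega⟩ (show i - 1 < j by omega)]
        apply (isoV_lt V hV _ _).mpr
        rw [← hτ, mem_descSet τ i hi1 (by omega)] at hiS
        exact hiS
    · -- image condition
      have hsub : (Finset.univ : Finset (Fin j)).image
          (fun k => (Equiv.ofBijective (bf τ) (hbf_bij τ)) (Fin.castLE hjm k)) ⊆ V := by
        intro v hv
        simp only [Finset.mem_image] at hv
        obtain ⟨k, _, hk⟩ := hv
        rw [happ, hbf_lt τ (Fin.castLE hjm k) k.isLt] at hk
        rw [← hk]
        exact (V.orderIsoOfFin hV _).2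
      apply Finset.eq_of_subset_of_card_le hsub
      rw [hV, Finset.card_image_of_injective _
        (fun k1 k2 he => hcast_inj ((Equiv.ofBijective (bf τ) (hbf_bij τ)).injective he))]
      simp
  · -- injective
    intro τ1 h1 τ2 h2 he
    apply Equiv.ext
    intro k
    have h0 : Equiv.ofBijective (bf τ1) (hbf_bij τ1) (Fin.castLE hjm k)
        = Equiv.ofBijective (bf τ2) (hbf_bij τ2) (Fin.castLE hjm k) := by rw [he]
    rw [Equiv.ofBijective_apply, Equiv.ofBijective_apply,
      hbf_lt τ1 (Fin.castLE hjm k) k.isLt, hbf_lt τ2 (Fin.castLE hjm k) k.isLt] at h0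
    have h5 := (V.orderIsoOfFin hV).injective (Subtype.coe_injective h0)
    exact h5
  · -- surjective
    intro σ hσ
    simp only [Finset.mem_filter, Finset.mem_univ, true_and] at hσ
    obtain ⟨hd, him⟩ := hσ
    have hmemV : ∀ k : Fin j, σ (Fin.castLE hjm k) ∈ V := by
      intro k
      rw [← him]
      exact Finset.mem_image_of_mem _ (Finset.mem_univ k)
    set tf : Fin j → Fin j := fun k => (V.orderIsoOfFin hV).symm ⟨σ (Fin.castLE hjm k), hmemV k⟩
      with htf
    have htf_bij : Function.Bijective tf := by
      rw [← Finite.injective_iff_bijective]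
      intro k1 k2 he
      have h3 := (V.orderIsoOfFin hV).symm.injective he
      have h4 : σ (Fin.castLE hjm k1) = σ (Fin.castLE hjm k2) := Subtype.ext_iff.mp h3
      exact hcast_inj (σ.injective h4)
    refine ⟨Equiv.ofBijective tf htf_bij, ?_, ?_⟩
    · -- descSet τ = S
      simp only [Finset.mem_filter, Finset.mem_univ, true_and]
      ext i
      constructor
      · intro hid
        have hiIcc := descSet_subset _ hid
        rw [Finset.mem_Icc] at hiIcc
        have hi1 : 1 ≤ i := hiIcc.1
        have hij : i < j := by omega
        rw [mem_descSet _ i hi1 hij, Equiv.ofBijective_apply, Equiv.ofBijective_apply] at hid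
        have h5 := (isoV_symm_lt V hV _ _).mp hid
        rw [← hd, Finset.mem_sdiff, Finset.mem_singleton]
        refine ⟨?_, by omega⟩
        rw [mem_descSet σ i hi1 (by omega)]
        exact h5
      · intro hiS
        obtain ⟨hi1, hij⟩ := hS i hiS
        rw [mem_descSet _ i hi1 (by omega), Equiv.ofBijective_apply, Equiv.ofBijective_apply]
        apply (isoV_symm_lt V hV _ _).mpr
        rw [← hd, Finset.mem_sdiff, Finset.mem_singleton] at hiS
        obtain ⟨hid, _⟩ := hiS
        rw [mem_descSet σ i hi1 (by omega)] at hid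
        exact hid
    · -- bf tf = σ
      apply Equiv.ext
      intro i
      rw [Equiv.ofBijective_apply]
      by_cases hij : (i : ℕ) < j
      · rw [hbf_lt _ i hij, Equiv.ofBijective_apply, htf]
        simp only
        rw [OrderIso.apply_symm_apply]
        have hci : Fin.castLE hjm ⟨(i : ℕ), hij⟩ = i := Fin.ext rfl
        exact congrArg σ hci
      · rw [hbf_ge _ i hij]
        have hmemVc : ∀ k : Fin (m - j), σ ⟨j + (k : ℕ), by omega⟩ ∈ Vᶜ := by
          intro k
          rw [Finset.mem_compl]
          intro hmem
          have hmem2 : σ ⟨j + (k : ℕ), by omega⟩ ∈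
              (Finset.univ : Finset (Fin j)).image (fun k => σ (Fin.castLE hjm k)) := by
            rw [him]; exact hmem
          simp only [Finset.mem_image] at hmem2
          obtain ⟨k', _, hk'⟩ := hmem2
          have h6 : ((Fin.castLE hjm k' : Fin m) : ℕ) = j + (k : ℕ) :=
            congrArg Fin.val (σ.injective hk')
          have h7 : (k' : ℕ) = j + (k : ℕ) := h6
          omega
        have hsm : StrictMono (fun k : Fin (m - j) => σ ⟨j + (k : ℕ), by omega⟩) := by
          apply strictMono_of_succ
          intro l hl
          simp only
          have hp1 : 1 ≤ j + l + 1 := by omega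
          have hpm : j + l + 1 < m := by omega
          have hnotd : (j + l + 1) ∉ descSet σ := by
            intro hmem
            have h8 : (j + l + 1) ∈ S := by
              rw [← hd, Finset.mem_sdiff, Finset.mem_singleton]
              exact ⟨hmem, by omega⟩
            have := hS _ h8
            omega
          rw [mem_descSet σ (j + l + 1) hp1 hpm] at hnotd
          push_neg at hnotd
          have hne : σ ⟨j + l + 1 - 1, by omega⟩ ≠ σ ⟨j + l + 1, hpm⟩ := by
            intro he
            have h9 : j + l + 1 - 1 = j + l + 1 := congrArg Fin.val (σ.injective he)
            omega
          have he1 : (⟨j + l, by omega⟩ : Fin m) = ⟨j + l + 1 - 1, by omega⟩ :=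
            Fin.ext (show j + l = j + l + 1 - 1 by omega)
          have he2 : (⟨j + (l + 1), by omega⟩ : Fin m) = ⟨j + l + 1, hpm⟩ :=
            Fin.ext (show j + (l + 1) = j + l + 1 by omega)
          rw [Fin.lt_def, he1, he2]
          have h10 := Fin.val_ne_of_ne hne
          omega
        have huniq := Finset.orderEmbOfFin_unique hVc
          (f := fun k : Fin (m - j) => σ ⟨j + (k : ℕ), by omega⟩)
          (fun k => hmemVc k) hsm
        have happly := congrFun huniq ⟨(i : ℕ) - j, by omega⟩
        simp only at happly
        have he3 : (⟨j + ((i : ℕ) - j), by omega⟩ : Fin m) = i :=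
          Fin.ext (show j + ((i : ℕ) - j) = (i : ℕ) by omega)
        rw [he3] at happly
        rw [Finset.coe_orderIsoOfFin_apply]
        exact happly.symm

lemma desc_split (m j : ℕ) (hjm : j ≤ m) (S : Finset ℕ) (hS : ∀ s ∈ S, 1 ≤ s ∧ s + 1 ≤ j) :
    ((Finset.univ.filter fun σ : Equiv.Perm (Fin m) => descSet σ \ {j} = S)).card
      = m.choose j * betaN j S := by
  have hcast_inj : Function.Injective (Fin.castLE hjm) := by
    intro k1 k2 h
    have h2 := congrArg Fin.val h
    exact Fin.ext h2
  rw [Finset.card_eq_sum_card_fiberwise (f := fun σ : Equiv.Perm (Fin m) =>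
      (Finset.univ : Finset (Fin j)).image (fun k => σ (Fin.castLE hjm k)))
      (t := Finset.powersetCard j Finset.univ) (fun σ _ => by
        rw [Finset.mem_coe]
        beta_reduce
        rw [Finset.mem_powersetCard_univ,
          Finset.card_image_of_injective _ (fun k1 k2 h => hcast_inj (σ.injective h))]
        simp)]
  have hterm : ∀ V ∈ Finset.powersetCard j (Finset.univ : Finset (Fin m)),
      ((Finset.univ.filter fun σ : Equiv.Perm (Fin m) => descSet σ \ {j} = S).filter
        (fun σ => (Finset.univ : Finset (Fin j)).image (fun k => σ (Fin.castLE hjm k)) = V)).card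
      = betaN j S := by
    intro V hV
    rw [Finset.filter_filter]
    exact fiber_card m j hjm S hS V (Finset.mem_powersetCard_univ.mp hV)
  rw [Finset.sum_congr rfl hterm, Finset.sum_const, Finset.card_powersetCard,
    Finset.card_univ, Fintype.card_fin, smul_eq_mul]

lemma desc_gamma0 (m : ℕ) (S : Finset ℕ) :
    ((Finset.univ.filter fun σ : Equiv.Perm (Fin m) => descSet σ \ {0} = S)).card
      = betaN m S := by
  unfold betaN
  congr 1
  apply Finset.filter_congr
  intro σ _
  have h0 : (0 : ℕ) ∉ descSet σ := by
    intro h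
    have := Finset.mem_Icc.mp (descSet_subset σ h)
    omega
  rw [Finset.sdiff_eq_self_of_disjoint (Finset.disjoint_singleton_right.mpr h0)]

lemma desc_gamma (m j : ℕ) (hj : 1 ≤ j) (S : Finset ℕ) (hjS : j ∉ S) :
    ((Finset.univ.filter fun σ : Equiv.Perm (Fin m) => descSet σ \ {j} = S)).card
      = betaN m S + betaN m (insert j S) := by
  unfold betaN
  have hsplit : (Finset.univ.filter fun σ : Equiv.Perm (Fin m) => descSet σ \ {j} = S)
      = (Finset.univ.filter fun σ : Equiv.Perm (Fin m) => descSet σ = S)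
        ∪ (Finset.univ.filter fun σ : Equiv.Perm (Fin m) => descSet σ = insert j S) := by
    ext σ
    simp only [Finset.mem_union, Finset.mem_filter, Finset.mem_univ, true_and]
    constructor
    · intro h
      by_cases hjd : j ∈ descSet σ
      · right
        ext i
        rw [Finset.mem_insert]
        constructor
        · intro hid
          by_cases hij : i = j
          · exact Or.inl hij
          · right
            rw [← h, Finset.mem_sdiff, Finset.mem_singleton]
            exact ⟨hid, hij⟩
        · rintro (rfl | hiS)
          · exact hjd
          · rw [← h, Finset.mem_sdiff, Finset.mem_singleton] at hiS
            exact hiS.1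
      · left
        rw [← h]
        symm
        apply Finset.sdiff_eq_self_of_disjoint (Finset.disjoint_singleton_right.mpr hjd)
    · rintro (h | h)
      · rw [h]
        apply Finset.sdiff_eq_self_of_disjoint (Finset.disjoint_singleton_right.mpr hjS)
      · rw [h]
        rw [Finset.insert_sdiff_of_mem _ (Finset.mem_singleton_self j)]
        apply Finset.sdiff_eq_self_of_disjoint (Finset.disjoint_singleton_right.mpr hjS)
  rw [hsplit, Finset.card_union_of_disjoint]
  rw [Finset.disjoint_filter]
  intro σ _ h1 h2
  rw [h1] at h2
  exact hjS (h2 ▸ Finset.mem_insert_self j S)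

lemma betaN_empty (m : ℕ) : betaN m ∅ = 1 := by
  unfold betaN
  have huniv : Finset.card (Finset.univ : Finset (Fin m)) = m := by simp
  have hid : descSet (1 : Equiv.Perm (Fin m)) = ∅ := by
    unfold descSet permVal
    apply Finset.filter_false_of_mem
    intro i hi
    rw [Finset.mem_Icc] at hi
    rw [dif_pos (show i < m by omega), dif_pos (show i - 1 < m by omega)]
    simp only [Equiv.Perm.coe_one, id_eq]
    omega
  have hkey : (Finset.univ.filter fun σ : Equiv.Perm (Fin m) => descSet σ = ∅) = {1} := by
    ext σ
    simp only [Finset.mem_filter, Finset.mem_univ, true_and, Finset.mem_singleton]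
    constructor
    · intro h
      have hsm : StrictMono (fun i : Fin m => σ i) := by
        apply strictMono_of_succ
        intro l hl
        have hp1 : 1 ≤ l + 1 := by omega
        have hnotd : (l + 1) ∉ descSet σ := by rw [h]; exact Finset.notMem_empty _
        rw [mem_descSet σ (l + 1) hp1 hl] at hnotd
        push_neg at hnotd
        have hne : σ ⟨l + 1 - 1, by omega⟩ ≠ σ ⟨l + 1, hl⟩ := by
          intro he
          have h9 : l + 1 - 1 = l + 1 := congrArg Fin.val (σ.injective he)
          omega
        have he1 : (⟨l, by omega⟩ : Fin m) = ⟨l + 1 - 1, by omega⟩ :=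
          Fin.ext (show l = l + 1 - 1 by omega)
        rw [Fin.lt_def, he1]
        have h10 := Fin.val_ne_of_ne hne
        omega
      have h1 := Finset.orderEmbOfFin_unique huniv
        (f := fun i : Fin m => σ i) (fun k => Finset.mem_univ _) hsm
      have h2 := Finset.orderEmbOfFin_unique huniv
        (f := fun i : Fin m => i) (fun k => Finset.mem_univ _) strictMono_id
      apply Equiv.ext
      intro i
      have := congrFun h1 i
      rw [← congrFun h2 i] at this
      rw [this]
      rfl
    · intro h
      rw [h]
      exact hid
  rw [hkey, Finset.card_singleton]

lemma betaH (m : ℕ) (S : Finset ℕ) (hS : ∀ s ∈ S, 1 ≤ s ∧ s ≤ m - 1) :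
    (betaN m S : ℤ) = ∑ j ∈ insert 0 S,
      (-1 : ℤ) ^ ((S.filter fun s => j < s).card) * (m.choose j) *
        betaN j (S.filter fun s => s < j) := by
  induction S using Finset.strongInductionOn with
  | _ S IH =>
  rcases S.eq_empty_or_nonempty with rfl | hne
  · simp [betaN_empty]
  · set s := S.max' hne with hs
    have hsS : s ∈ S := S.max'_mem hne
    have hsmax : ∀ t ∈ S, t ≤ s := fun t ht => S.le_max' t ht
    obtain ⟨hs1, hsm1⟩ := hS s hsS
    set S' := S.erase s with hS'
    have hS'sub : ∀ t ∈ S', t ∈ S ∧ t < s := by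
      intro t ht
      rw [hS', Finset.mem_erase] at ht
      exact ⟨ht.2, lt_of_le_of_ne (hsmax t ht.2) ht.1⟩
    have hS'lt : S.filter (fun t => t < s) = S' := by
      ext t
      rw [Finset.mem_filter, hS', Finset.mem_erase]
      constructor
      · rintro ⟨h1, h2⟩; exact ⟨by omega, h1⟩
      · rintro ⟨h1, h2⟩; exact ⟨h2, lt_of_le_of_ne (hsmax t h2) h1⟩
    have hins : insert s S' = S := by rw [hS']; exact Finset.insert_erase hsS
    have hkey : (betaN m S : ℤ)
        = (m.choose s : ℤ) * betaN s S' - betaN m S' := by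
      have hds := desc_split m s (by omega) S' (fun t ht => by
        have := hS'sub t ht
        have := hS t this.1
        constructor
        · omega
        · omega)
      have hdg := desc_gamma m s hs1 S' (Finset.notMem_erase s S)
      rw [hds] at hdg
      rw [hins] at hdg
      have : (m.choose s * betaN s S' : ℤ) = (betaN m S' : ℤ) + betaN m S := by
        exact_mod_cast congrArg (Nat.cast : ℕ → ℤ) hdg
      omega
    rw [hkey]
    have hIH := IH S' (Finset.erase_ssubset hsS) (fun t ht => hS t (hS'sub t ht).1)
    -- now rewrite the RHS sum
    have hinsert : insert 0 S = insert s (insert 0 S') := by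
      rw [Finset.insert_comm, hins]
    rw [hinsert, Finset.sum_insert (by
      simp only [Finset.mem_insert]
      push_neg
      exact ⟨by omega, Finset.notMem_erase s S⟩)]
    have hterm_s : (-1 : ℤ) ^ ((S.filter fun t => s < t).card) * (m.choose s)
        * betaN s (S.filter fun t => t < s) = (m.choose s : ℤ) * betaN s S' := by
      have h1 : S.filter (fun t => s < t) = ∅ := by
        apply Finset.filter_false_of_mem
        intro t ht
        have := hsmax t ht
        omega
      rw [h1, hS'lt, Finset.card_empty, pow_zero, one_mul]
    have hterm_j : ∀ j ∈ insert 0 S',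
        (-1 : ℤ) ^ ((S.filter fun t => j < t).card) * (m.choose j) *
          betaN j (S.filter fun t => t < j)
        = - ((-1 : ℤ) ^ ((S'.filter fun t => j < t).card) * (m.choose j) *
          betaN j (S'.filter fun t => t < j)) := by
      intro j hj
      have hjs : j < s := by
        rcases Finset.mem_insert.mp hj with rfl | hj'
        · omega
        · exact (hS'sub j hj').2
      have h1 : S.filter (fun t => j < t) = insert s (S'.filter fun t => j < t) := by
        ext t
        simp only [Finset.mem_filter, Finset.mem_insert]
        constructor
        · rintro ⟨h2, h3⟩
          by_cases hts : t = s
          · exact Or.inl hts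
          · right
            rw [hS', Finset.mem_erase]
            exact ⟨⟨hts, h2⟩, h3⟩
        · rintro (rfl | ⟨h2, h3⟩)
          · exact ⟨hsS, hjs⟩
          · exact ⟨(hS'sub t h2).1, h3⟩
      have h2 : S.filter (fun t => t < j) = S'.filter (fun t => t < j) := by
        ext t
        simp only [Finset.mem_filter, hS', Finset.mem_erase]
        constructor
        · rintro ⟨h3, h4⟩
          exact ⟨⟨by omega, h3⟩, h4⟩
        · rintro ⟨⟨h3, h4⟩, h5⟩
          exact ⟨h4, h5⟩
      rw [h1, h2, Finset.card_insert_of_notMem (by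
        rw [Finset.mem_filter]
        push_neg
        intro h3
        exact absurd (hS'sub s h3).2 (by omega))]
      rw [pow_succ]
      ring
    rw [Finset.sum_congr rfl hterm_j, Finset.sum_neg_distrib, ← hIH, hterm_s]
    ring

lemma neg_one_congr {p q : ℕ} (h : p % 2 = q % 2) : ((-1 : ℤ)) ^ p = (-1) ^ q := by
  rw [neg_one_pow_eq_pow_mod_two, h, ← neg_one_pow_eq_pow_mod_two]

lemma Fval_zero (a : ℕ → ℕ) : Fval a 0 = 1 := by
  unfold Fval
  have h1 : PF a 0 = {fun i : Fin 0 => i.elim0} := by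
    ext b
    simp only [PF, Finset.mem_filter, Fintype.mem_piFinset, Finset.mem_singleton]
    constructor
    · intro _
      funext i
      exact i.elim0
    · intro h
      refine ⟨fun i => i.elim0, ?_, ?_⟩
      · intro i; exact i.elim0
      · intro t h1 h2; omega
  rw [h1, Finset.sum_singleton]
  simp

lemma sum_parity (s : Finset ℕ) (f : ℕ → ℕ) :
    (∑ t ∈ s, f t) % 2 = (s.filter fun t => Odd (f t)).card % 2 := by
  classical
  induction s using Finset.induction_on with
  | empty => simp
  | @insert t s hts ih =>
    rw [Finset.sum_insert hts, Finset.filter_insert]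
    by_cases h : Odd (f t)
    · rw [if_pos h, Finset.card_insert_of_notMem
        (fun hmem => hts (Finset.mem_filter.mp hmem).1)]
      have h2 := Nat.odd_iff.mp h
      omega
    · rw [if_neg h]
      have h2 := Nat.even_iff.mp (Nat.not_odd_iff_even.mp h)
      omega

lemma odd_count (a : ℕ → ℕ) (m j : ℕ) (hm : 1 ≤ m) (hodd : Odd (a 1))
    (hj : j ∈ insert 0 ((Finset.Icc 1 (m - 1)).filter fun i => Odd (a (i + 1)))) :
    ((Finset.Ioc j m).filter fun t => Odd (a t)).card
      = ((((Finset.Icc 1 (m - 1)).filter fun i => Odd (a (i + 1))).filter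
          fun s => j < s).card) + 1 := by
  set S := (Finset.Icc 1 (m - 1)).filter fun i => Odd (a (i + 1)) with hSdef
  have hjm : j ≤ m - 1 := by
    rcases Finset.mem_insert.mp hj with rfl | hj'
    · omega
    · have := Finset.mem_Icc.mp (Finset.mem_filter.mp hj').1
      omega
  have hjodd : Odd (a (j + 1)) := by
    rcases Finset.mem_insert.mp hj with rfl | hj'
    · exact hodd
    · exact (Finset.mem_filter.mp hj').2
  have hset : (Finset.Ioc j m).filter (fun t => Odd (a t))
      = insert (j + 1) ((S.filter fun s => j < s).image (· + 1)) := by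
    ext t
    simp only [Finset.mem_filter, Finset.mem_Ioc, Finset.mem_insert, Finset.mem_image,
      hSdef, Finset.mem_Icc]
    constructor
    · rintro ⟨⟨h1, h2⟩, h3⟩
      by_cases ht : t = j + 1
      · exact Or.inl ht
      · right
        refine ⟨t - 1, ⟨⟨⟨by omega, by omega⟩, ?_⟩, by omega⟩, by omega⟩
        have : t - 1 + 1 = t := by omega
        rw [this]
        exact h3
    · rintro (rfl | ⟨s, ⟨⟨⟨h1, h2⟩, h3⟩, h4⟩, h5⟩)
      · exact ⟨⟨by omega, by omega⟩, hjodd⟩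
      · subst h5
        exact ⟨⟨by omega, by omega⟩, h3⟩
  rw [hset, Finset.card_insert_of_notMem (by
    simp only [Finset.mem_image]
    rintro ⟨s, hs, he⟩
    have := (Finset.mem_filter.mp hs).2
    omega)]
  rw [Finset.card_image_of_injective _ (fun x y h => by omega)]

lemma sum_a_split (a : ℕ → ℕ) (j m : ℕ) (hjm : j ≤ m) :
    (∑ i ∈ Finset.Icc 1 j, a i) + (∑ t ∈ Finset.Ioc j m, a t)
      = ∑ i ∈ Finset.Icc 1 m, a i := by
  have e1 : Finset.Icc 1 j = Finset.Ioc 0 j := by rw [← Finset.Icc_add_one_left_eq_Ioc, zero_add]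
  have e2 : Finset.Icc 1 m = Finset.Ioc 0 m := by rw [← Finset.Icc_add_one_left_eq_Ioc, zero_add]
  rw [e1, e2]
  exact Finset.sum_Ioc_consecutive _ (by omega) hjm

lemma sum_a_ge (a : ℕ → ℕ) (n j : ℕ) (hjn : j ≤ n)
    (hpos : ∀ i, 1 ≤ i → i ≤ n → 1 ≤ a i) : j ≤ ∑ i ∈ Finset.Icc 1 j, a i := by
  calc j = ∑ i ∈ Finset.Icc 1 j, 1 := by
        rw [Finset.sum_const, Nat.card_Icc, smul_eq_mul]
        omega
  _ ≤ ∑ i ∈ Finset.Icc 1 j, a i := Finset.sum_le_sum (fun i hi => by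
        have := Finset.mem_Icc.mp hi
        exact hpos i this.1 (by omega))

lemma main_induction (a : ℕ → ℕ) (n : ℕ)
    (hpos : ∀ i, 1 ≤ i → i ≤ n → 1 ≤ a i)
    (hmono : ∀ i j, 1 ≤ i → i ≤ j → j ≤ n → a i ≤ a j) :
    ∀ m, m ≤ n →
      (Even (a 1) → 1 ≤ m → Fval a m = 0) ∧
      (Odd (a 1) → Fval a m = (-1) ^ ((∑ i ∈ Finset.Icc 1 m, a i) - m) *
        betaN m ((Finset.Icc 1 (m - 1)).filter fun i => Odd (a (i + 1)))) := by
  intro m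
  induction m using Nat.strong_induction_on with
  | _ m IH =>
  intro hmn
  constructor
  · -- even case
    intro heven hm1
    rw [Fval_rec a n m hm1 hmn hmono]
    apply Finset.sum_eq_zero
    intro j hj
    simp only [Finset.mem_filter, Finset.mem_range] at hj
    obtain ⟨hjm, hjodd⟩ := hj
    rcases Nat.eq_zero_or_pos j with rfl | hj1
    · exact absurd hjodd (by simpa using heven)
    · rw [(IH j hjm (by omega)).1 heven hj1, mul_zero]
  · -- odd case
    intro hodd
    rcases Nat.eq_zero_or_pos m with rfl | hm1
    · rw [Fval_zero]
      have h1 : Finset.Icc 1 (0 - 1) = (∅ : Finset ℕ) := by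
        apply Finset.Icc_eq_empty
        omega
      rw [h1, Finset.filter_empty, betaN_empty]
      simp
    · set S := (Finset.Icc 1 (m - 1)).filter (fun i => Odd (a (i + 1))) with hSdef
      have hSmem : ∀ s ∈ S, 1 ≤ s ∧ s ≤ m - 1 := by
        intro s hs
        exact Finset.mem_Icc.mp (Finset.mem_filter.mp hs).1
      rw [Fval_rec a n m hm1 hmn hmono]
      have hidx : (Finset.range m).filter (fun j => Odd (a (j + 1))) = insert 0 S := by
        ext j
        simp only [Finset.mem_filter, Finset.mem_range, Finset.mem_insert, hSdef,
          Finset.mem_Icc]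
        constructor
        · rintro ⟨h1, h2⟩
          rcases Nat.eq_zero_or_pos j with rfl | hj1
          · exact Or.inl rfl
          · exact Or.inr ⟨⟨hj1, by omega⟩, h2⟩
        · rintro (rfl | ⟨⟨h1, h2⟩, h3⟩)
          · exact ⟨hm1, hodd⟩
          · exact ⟨by omega, h3⟩
      rw [hidx]
      rw [betaH m S hSmem, Finset.mul_sum]
      apply Finset.sum_congr rfl
      intro j hj
      have hjm : j ≤ m - 1 := by
        rcases Finset.mem_insert.mp hj with rfl | hj'
        · omega
        · exact (hSmem j hj').2
      have hIHj := (IH j (by omega) (by omega)).2 hodd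
      have hSj : (Finset.Icc 1 (j - 1)).filter (fun i => Odd (a (i + 1)))
          = S.filter (fun s => s < j) := by
        ext i
        simp only [Finset.mem_filter, Finset.mem_Icc, hSdef]
        constructor
        · rintro ⟨⟨h1, h2⟩, h3⟩
          exact ⟨⟨⟨h1, by omega⟩, h3⟩, by omega⟩
        · rintro ⟨⟨⟨h1, h2⟩, h3⟩, h4⟩
          exact ⟨⟨h1, by omega⟩, h3⟩
      rw [hIHj, hSj]
      -- now pure sign bookkeeping
      have hA : (∑ i ∈ Finset.Icc 1 j, a i) + (∑ t ∈ Finset.Ioc j m, a t)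
          = ∑ i ∈ Finset.Icc 1 m, a i := sum_a_split a j m (by omega)
      have hAj : j ≤ ∑ i ∈ Finset.Icc 1 j, a i := sum_a_ge a n j (by omega) hpos
      have hAm : m ≤ ∑ i ∈ Finset.Icc 1 m, a i := sum_a_ge a n m (by omega) hpos
      have hpar : (∑ t ∈ Finset.Ioc j m, a t) % 2
          = ((S.filter fun s => j < s).card + 1) % 2 := by
        rw [sum_parity, odd_count a m j hm1 hodd (by exact hj)]
      set Aj := ∑ i ∈ Finset.Icc 1 j, a i
      set Am := ∑ i ∈ Finset.Icc 1 m, a i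
      set e := (S.filter fun s => j < s).card
      have hsign : ((-1 : ℤ)) ^ (m - j + 1) * (-1) ^ (Aj - j)
          = (-1) ^ (Am - m) * (-1) ^ e := by
        rw [← pow_add, ← pow_add]
        apply neg_one_congr
        omega
      calc (-1 : ℤ) ^ (m - j + 1) * ↑(m.choose j) *
            ((-1) ^ (Aj - j) * ↑(betaN j (S.filter fun s => s < j)))
          = ((-1 : ℤ) ^ (m - j + 1) * (-1) ^ (Aj - j)) *
            (↑(m.choose j) * ↑(betaN j (S.filter fun s => s < j))) := by ring
        _ = ((-1 : ℤ) ^ (Am - m) * (-1) ^ e) *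
            (↑(m.choose j) * ↑(betaN j (S.filter fun s => s < j))) := by rw [hsign]
        _ = (-1 : ℤ) ^ (Am - m) *
            ((-1) ^ e * ↑(m.choose j) * ↑(betaN j (S.filter fun s => s < j))) := by ring

/-- Theorem 2.4: for a non-decreasing sequence `a` of positive integers,
`I_a(-1) = 0` if `a_1` is even, and `I_a(-1) = (-1)^{a_1+⋯+a_n-n} β_n(S)` if `a_1`
is odd, where `S = {i ∈ [n-1] : a_{i+1} is odd}`. -/
theorem stmt0 (n : ℕ) (hn : 1 ≤ n) (a : ℕ → ℕ)
    (hpos : ∀ i, 1 ≤ i → i ≤ n → 1 ≤ a i)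
    (hmono : ∀ i j, 1 ≤ i → i ≤ j → j ≤ n → a i ≤ a j) :
    (Even (a 1) →
      ∑ᶠ b ∈ {b : Fin n → ℕ | IsAPF a b}, ((-1 : ℤ) ^ ((∑ i, b i) - n)) = 0) ∧
    (Odd (a 1) →
      ∑ᶠ b ∈ {b : Fin n → ℕ | IsAPF a b}, ((-1 : ℤ) ^ ((∑ i, b i) - n)) =
        (-1) ^ ((∑ i ∈ Finset.Icc 1 n, a i) - n) *
          betaN n ((Finset.Icc 1 (n - 1)).filter fun i => Odd (a (i + 1)))) := by
  constructor
  · intro heven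
    rw [finsum_eq_Fval n hn a]
    exact (main_induction a n hpos hmono n le_rfl).1 heven hn
  · intro hodd
    rw [finsum_eq_Fval n hn a]
    exact (main_induction a n hpos hmono n le_rfl).2 hodd
end

section
/- Let a = (a_1,…,a_n) be a non-decreasing sequence of positive integers, let H ∈ 𝓗_a, let σ_i be a moveable cell of H, and let H' ∈ 𝓗_a be obtained from H by moving σ_i one row in its assigned direction. Then: (a) σ_i is moveable in the opposite direction in H'; (b) if j ≠ i and σ_j is moveable in H, then σ_j is moveable in the same direction in H'; (c) if σ_j is not moveable in H, then σ_j is not moveable in H'. -/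
open Finset
open scoped Classical

/-- A properly filled horizontal strip inside the Young diagram `Y_a`
(columns 0-indexed from the left by `c : Fin n`, so the (0-indexed) column `c`
has length `a (n - c)`; rows are 1-indexed from the top; `num c ∈ {1, …, n}` is
the number written in the cell of column `c`). -/
def IsPFHS {n : ℕ} (a : ℕ → ℕ) (row num : Fin n → ℕ) : Prop :=
  (∀ c : Fin n, 1 ≤ row c ∧ row c ≤ a (n - (c : ℕ))) ∧
  (∀ c c' : Fin n, c ≤ c' → row c' ≤ row c) ∧
  (∀ c, 1 ≤ num c ∧ num c ≤ n) ∧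
  Function.Injective num ∧
  (∀ c c' : Fin n, c < c' → row c = row c' → (Odd (row c) ↔ num c < num c'))

/-- The number written immediately to the right of column `c`, with the imaginary
cell `σ_{n+1} = n + 1` just outside the diagram. -/
def nextVal {n : ℕ} (num : Fin n → ℕ) (c : Fin n) : ℕ :=
  if h : (c : ℕ) + 1 < n then num ⟨(c : ℕ) + 1, h⟩ else n + 1

/-- The assigned direction of the cell in column `c` is *up*, i.e.
`ε_c = sgn(σ_c - σ_{c+1}) (-1)^{r(σ_c)} = -1`. -/
def AssignedUp {n : ℕ} (row num : Fin n → ℕ) (c : Fin n) : Prop :=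
  (nextVal num c < num c ∧ Odd (row c)) ∨ (num c < nextVal num c ∧ Even (row c))

/-- The cell in column `c` is moveable up: its assigned direction is up. -/
def MoveableUp {n : ℕ} (row num : Fin n → ℕ) (c : Fin n) : Prop :=
  AssignedUp row num c

/-- The cell in column `c` is moveable down: its assigned direction is down, it is not
the bottom cell of its column, and moving it one row down again yields a properly
filled horizontal strip. -/
def MoveableDown {n : ℕ} (a : ℕ → ℕ) (row num : Fin n → ℕ) (c : Fin n) : Prop :=
  ¬AssignedUp row num c ∧ row c < a (n - (c : ℕ)) ∧
    IsPFHS a (Function.update row c (row c + 1)) num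

lemma num_ne_nextVal {n : ℕ} {a : ℕ → ℕ} {row num : Fin n → ℕ}
    (hH : IsPFHS a row num) (c : Fin n) : num c ≠ nextVal num c := by
  unfold nextVal
  split_ifs with h
  · intro he
    have h2 := congrArg Fin.val (hH.2.2.2.1 he)
    simp at h2
  · have := (hH.2.2.1 c).2
    omega

lemma assignedUp_congr {n : ℕ} {row row2 num : Fin n → ℕ} {c : Fin n}
    (h : row c = row2 c) : AssignedUp row num c ↔ AssignedUp row2 num c := by
  unfold AssignedUp; rw [h]

lemma assignedUp_flip {n : ℕ} {row row2 num : Fin n → ℕ} {c : Fin n}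
    (hne : num c ≠ nextVal num c) (h : row2 c % 2 ≠ row c % 2) :
    AssignedUp row2 num c ↔ ¬ AssignedUp row num c := by
  unfold AssignedUp
  simp only [Nat.odd_iff, Nat.even_iff]
  omega

lemma moveDown_pres {n : ℕ} {a : ℕ → ℕ} {row num : Fin n → ℕ}
    (hH : IsPFHS a row num) (c : Fin n) {row' : Fin n → ℕ}
    (hrow' : row' = Function.update row c
      (if AssignedUp row num c then row c - 1 else row c + 1))
    (hH' : IsPFHS a row' num) {j : Fin n} (hj : j ≠ c)
    (hjd : MoveableDown a row num j) : MoveableDown a row' num j := by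
  obtain ⟨hnA, hlt, hPF⟩ := hjd
  have hrj : row' j = row j := by rw [hrow']; exact Function.update_of_ne hj _ _
  have hrowx : ∀ x : Fin n, x ≠ c → row' x = row x := by
    intro x hx; rw [hrow']; exact Function.update_of_ne hx _ _
  have hrjx : ∀ x : Fin n, x ≠ j → Function.update row j (row j + 1) x = row x :=
    fun x hx => Function.update_of_ne hx _ _
  have hRx : ∀ x : Fin n, Function.update row' j (row' j + 1) x
      = if x = j then row j + 1 else row' x := by
    intro x
    rw [Function.update_apply, hrj]
  refine ⟨fun h => hnA ((assignedUp_congr hrj).mp h), by rw [hrj]; exact hlt,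
    ?_, ?_, hH.2.2.1, hH.2.2.2.1, ?_⟩
  · -- bounds
    intro x
    rw [hRx x]
    split_ifs with hx
    · rw [hx]
      have h2 := (hPF.1 j).2
      rw [Function.update_self] at h2
      exact ⟨Nat.le_add_left 1 (row j), h2⟩
    · exact hH'.1 x
  · -- monotonicity
    intro x y hxy
    rw [hRx x, hRx y]
    by_cases hy : y = j
    · rw [if_pos hy]
      rw [hy] at hxy
      by_cases hx : x = j
      · rw [if_pos hx]
      · rw [if_neg hx]
        have hm := hPF.2.1 x j hxy
        rw [Function.update_self, hrjx x hx] at hm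
        rcases eq_or_ne x c with rfl | hxc
        · by_cases hA : AssignedUp row num x
          · have hrc : row' x = row x - 1 := by
              rw [hrow', Function.update_self, if_pos hA]
            rcases Nat.lt_or_ge (row j + 1) (row x) with hlt2 | hge2
            · omega
            · exfalso
              have hceq : row x = row j + 1 := by omega
              have hclt : x < j := lt_of_le_of_ne hxy hx
              have p1 := hH'.2.2.2.2 x j hclt (by rw [hrc, hrj]; omega)
              have p2 := hPF.2.2.2.2 x j hclt
                (by rw [hrjx x hx, Function.update_self]; omega)
              rw [hrc] at p1
              rw [hrjx x hx] at p2
              rw [Nat.odd_iff] at p1 p2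
              omega
          · have hrc : row' x = row x + 1 := by
              rw [hrow', Function.update_self, if_neg hA]
            omega
        · rw [hrowx x hxc]
          omega
    · rw [if_neg hy]
      by_cases hx : x = j
      · rw [if_pos hx]
        have hm := hH'.2.1 x y hxy
        rw [hx, hrj] at hm
        omega
      · rw [if_neg hx]
        exact hH'.2.1 x y hxy
  · -- parity
    intro x y hxy heq
    rw [hRx x, hRx y] at heq
    rw [hRx x]
    by_cases hx : x = j
    · rw [if_pos hx] at heq ⊢
      by_cases hy : y = j
      · rw [hx, hy] at hxy
        exact absurd hxy (lt_irrefl _)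
      · rw [if_neg hy] at heq
        rw [hx] at hxy
        rcases eq_or_ne y c with rfl | hyc
        · exfalso
          have hm := hH'.2.1 j y (le_of_lt hxy)
          rw [hrj] at hm
          omega
        · rw [hrowx y hyc] at heq
          have p := hPF.2.2.2.2 j y hxy
            (by rw [Function.update_self, hrjx y hy]; exact heq)
          rw [Function.update_self] at p
          rw [hx]
          exact p
    · rw [if_neg hx] at heq ⊢
      by_cases hy : y = j
      · rw [if_pos hy] at heq
        rw [hy] at hxy
        rw [hy]
        rcases eq_or_ne x c with rfl | hxc
        · -- the hard case: x(=c) < j, x moved, row' x = row j + 1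
          by_cases hA : AssignedUp row num x
          · have hrc : row' x = row x - 1 := by
              rw [hrow', Function.update_self, if_pos hA]
            have hc1 : 1 ≤ row x := (hH.1 x).1
            have hceq : row x = row j + 2 := by omega
            have hcj : (x : ℕ) < (j : ℕ) := hxy
            have hc1n : (x : ℕ) + 1 < n := by
              have := j.isLt; omega
            set k : Fin n := ⟨(x : ℕ) + 1, hc1n⟩ with hk
            have hnk : nextVal num x = num k := by
              unfold nextVal
              rw [dif_pos hc1n]
            have hck : x < k := by
              rw [Fin.lt_def]; exact Nat.lt_succ_self _
            have hkc : k ≠ x := ne_of_gt hck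
            have hA' : (nextVal num x < num x ∧ Odd (row x)) ∨
                (num x < nextVal num x ∧ Even (row x)) := hA
            rw [hnk] at hA'
            by_cases hkj : k = j
            · rw [hkj] at hA'
              rw [heq]
              rw [Nat.odd_iff, Nat.even_iff] at hA'
              rw [Nat.odd_iff]
              omega
            · have hkle : k ≤ j := by
                rw [Fin.le_def]; exact hcj
              have hklt : k < j := lt_of_le_of_ne hkle hkj
              have h1 := hH.2.1 x k (le_of_lt hck)
              have h2 := hH.2.1 k j hkle
              rcases (show row k = row j ∨ row k = row j + 1 ∨ row k = row x by
                omega) with h3 | h3 | h3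
              · exfalso
                have hm := hPF.2.1 k j hkle
                rw [Function.update_self, hrjx k (ne_of_lt hklt)] at hm
                omega
              · have p1 := hH'.2.2.2.2 x k hck (by rw [heq, hrowx k hkc]; omega)
                have p2 := hPF.2.2.2.2 k j hklt
                  (by rw [hrjx k (ne_of_lt hklt), Function.update_self]; omega)
                rw [hrjx k (ne_of_lt hklt)] at p2
                rw [heq] at p1
                rw [h3] at p2
                rw [heq, Nat.odd_iff]
                rw [Nat.odd_iff] at p1 p2
                omega
              · exfalso
                have p := hH.2.2.2.2 x k hck (by omega)
                rw [Nat.odd_iff] at p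
                rw [Nat.odd_iff, Nat.even_iff] at hA'
                omega
          · exfalso
            have hrc : row' x = row x + 1 := by
              rw [hrow', Function.update_self, if_neg hA]
            have hm := hPF.2.1 x j (le_of_lt hxy)
            rw [Function.update_self, hrjx x (ne_of_lt hxy)] at hm
            omega
        · rw [hrowx x hxc] at heq ⊢
          have p := hPF.2.2.2.2 x j hxy
            (by rw [hrjx x hx, Function.update_self]; exact heq)
          rw [hrjx x hx] at p
          exact p
      · rw [if_neg hy] at heq
        exact hH'.2.2.2.2 x y hxy heq

/-- Lemma 2.2: if `H' ∈ 𝓗_a` is obtained from `H ∈ 𝓗_a` by moving a moveable cell `σ_c`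
one row in its assigned direction, then (a) `σ_c` is moveable in the opposite direction
in `H'`; (b) any other moveable cell of `H` is moveable in the same direction in `H'`;
(c) any non-moveable cell of `H` is not moveable in `H'`. -/
theorem stmt10 (n : ℕ) (hn : 1 ≤ n) (a : ℕ → ℕ)
    (hpos : ∀ i, 1 ≤ i → i ≤ n → 1 ≤ a i)
    (hmono : ∀ i j, 1 ≤ i → i ≤ j → j ≤ n → a i ≤ a j)
    (row num : Fin n → ℕ) (hH : IsPFHS a row num) (c : Fin n)
    (hmov : MoveableUp row num c ∨ MoveableDown a row num c)
    (row' : Fin n → ℕ)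
    (hrow' : row' =
      Function.update row c (if AssignedUp row num c then row c - 1 else row c + 1))
    (hH' : IsPFHS a row' num) :
    ((AssignedUp row num c → MoveableDown a row' num c) ∧
      (¬AssignedUp row num c → MoveableUp row' num c)) ∧
    (∀ j : Fin n, j ≠ c →
      (MoveableUp row num j → MoveableUp row' num j) ∧
      (MoveableDown a row num j → MoveableDown a row' num j)) ∧
    (∀ j : Fin n, ¬(MoveableUp row num j ∨ MoveableDown a row num j) →
      ¬(MoveableUp row' num j ∨ MoveableDown a row' num j)) := by
  have hne := num_ne_nextVal hH c
  have hc1 : 1 ≤ row c := (hH.1 c).1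
  have h1 : 1 ≤ row' c := (hH'.1 c).1
  have hrowx : ∀ x : Fin n, x ≠ c → row' x = row x := by
    intro x hx; rw [hrow']; exact Function.update_of_ne hx _ _
  have hrc : (AssignedUp row num c ∧ row' c = row c - 1) ∨
      (¬AssignedUp row num c ∧ row' c = row c + 1) := by
    by_cases hA : AssignedUp row num c
    · exact Or.inl ⟨hA, by rw [hrow', Function.update_self, if_pos hA]⟩
    · exact Or.inr ⟨hA, by rw [hrow', Function.update_self, if_neg hA]⟩
  have hflipc : AssignedUp row' num c ↔ ¬AssignedUp row num c :=
    assignedUp_flip hne (by rcases hrc with ⟨_, h⟩ | ⟨_, h⟩ <;> omega)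
  have hrevrow : row = Function.update row' c
      (if AssignedUp row' num c then row' c - 1 else row' c + 1) := by
    funext x
    rcases eq_or_ne x c with rfl | hx
    · rw [Function.update_self]
      rcases hrc with ⟨hA, h⟩ | ⟨hA, h⟩
      · rw [if_neg (fun h' => (hflipc.mp h') hA)]
        omega
      · rw [if_pos (hflipc.mpr hA)]
        omega
    · rw [Function.update_of_ne hx]
      exact (hrowx x hx).symm
  refine ⟨⟨?_, ?_⟩, ?_, ?_⟩
  · -- (a) up case
    intro hA
    rcases hrc with ⟨_, h⟩ | ⟨hA', _⟩
    · refine ⟨fun h' => (hflipc.mp h') hA, ?_, ?_⟩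
      · have h2 := (hH.1 c).2
        calc row' c < row c := by omega
          _ ≤ a (n - (c : ℕ)) := h2
      · have hfun : Function.update row' c (row' c + 1) = row := by
          funext x
          rcases eq_or_ne x c with rfl | hx
          · rw [Function.update_self]; omega
          · rw [Function.update_of_ne hx]; exact hrowx x hx
        rw [hfun]; exact hH
    · exact absurd hA hA'
  · -- (a) down case
    intro hA
    exact hflipc.mpr hA
  · -- (b)
    intro j hjne
    constructor
    · intro h
      exact (assignedUp_congr (hrowx j hjne).symm).mp h
    · exact moveDown_pres hH c hrow' hH' hjne
  · -- (c)
    intro j hnm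
    rcases eq_or_ne j c with rfl | hjc
    · exact fun _ => hnm hmov
    · rintro (h | h)
      · exact hnm (Or.inl ((assignedUp_congr (hrowx j hjc)).mp h))
      · exact hnm (Or.inr (moveDown_pres hH' c hrevrow hH hjc h))
end

section
/- Let a = (a_1,…,a_n) be a non-decreasing sequence of positive integers, let 𝓗̃_a ⊆ 𝓗_a be the set of properly filled horizontal strips having at least one moveable cell, and define ψ : 𝓗̃_a → 𝓗̃_a by moving the rightmost moveable cell one row in its assigned direction. Then ψ is a fixed-point-free involution satisfying s(ψ(H)) = s(H) ± 1 for all H ∈ 𝓗̃_a; consequently Σ_{H∈𝓗̃_a} (−1)^{s(H)} = 0 and I_a(−1) = Σ_{H∈𝓗_a∖𝓗̃_a} (−1)^{s(H)}. -/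
open Finset
open scoped Classical

/-- The set of (columns of) moveable cells of a strip. -/
noncomputable def moveSet {n : ℕ} (a : ℕ → ℕ) (row num : Fin n → ℕ) : Finset (Fin n) :=
  Finset.univ.filter fun c => MoveableUp row num c ∨ MoveableDown a row num c

/-- `s(H)`: the number of cells of `Y_a` lying strictly above a cell of the strip
with row function `row`. -/
def sCells {n : ℕ} (a : ℕ → ℕ) (row : Fin n → ℕ) : ℕ :=
  (((Finset.Icc 1 (a n)) ×ˢ (Finset.univ : Finset (Fin n))).filter
    (fun rc => rc.1 ≤ a (n - (rc.2 : ℕ)) ∧ rc.1 < row rc.2)).card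

/-- The involution `ψ`: move the rightmost moveable cell one row in its assigned
direction (identity if there are no moveable cells). -/
noncomputable def psiFn {n : ℕ} (a : ℕ → ℕ) (H : (Fin n → ℕ) × (Fin n → ℕ)) :
    (Fin n → ℕ) × (Fin n → ℕ) :=
  if h : (moveSet a H.1 H.2).Nonempty then
    let c := (moveSet a H.1 H.2).max' h
    (Function.update H.1 c
      (if AssignedUp H.1 H.2 c then H.1 c - 1 else H.1 c + 1), H.2)
  else H

section Helpers

variable {n : ℕ} {a : ℕ → ℕ} {row num : Fin n → ℕ}

/-- the value to the right differs from the value at `c`. -/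
lemma nextVal_ne (h : IsPFHS a row num) (c : Fin n) : nextVal num c ≠ num c := by
  unfold nextVal
  split_ifs with h1
  · intro he
    have : (⟨(c : ℕ) + 1, h1⟩ : Fin n) = c := h.2.2.2.1 he
    have := congrArg Fin.val this
    simp at this
  · have := (h.2.2.1 c).2
    omega

lemma assignedUp_update_ne {c c' : Fin n} (hcc' : c' ≠ c) (v : ℕ) :
    AssignedUp (Function.update row c v) num c' ↔ AssignedUp row num c' := by
  unfold AssignedUp
  rw [Function.update_of_ne hcc']

lemma assignedUp_parity {c : Fin n} (v : ℕ) (hpar : v % 2 ≠ row c % 2)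
    (hne : nextVal num c ≠ num c) :
    AssignedUp (Function.update row c v) num c ↔ ¬AssignedUp row num c := by
  unfold AssignedUp
  rw [Function.update_self]
  rcases lt_or_gt_of_ne hne with hlt | hgt
  · have h2 : ¬ num c < nextVal num c := by omega
    simp only [hlt, h2, false_and, or_false, true_and]
    rw [Nat.odd_iff, Nat.odd_iff]
    omega
  · have h2 : ¬ nextVal num c < num c := by omega
    have h3 : num c < nextVal num c := hgt
    simp only [h3, h2, false_and, false_or, true_and]
    rw [Nat.even_iff, Nat.even_iff]
    omega

lemma sCells_eq_sum (hmono : ∀ i j, 1 ≤ i → i ≤ j → j ≤ n → a i ≤ a j)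
    (hb : ∀ c : Fin n, 1 ≤ row c ∧ row c ≤ a (n - (c : ℕ))) :
    sCells a row = ∑ c : Fin n, (row c - 1) := by
  unfold sCells
  rw [Finset.card_filter, Finset.sum_product, Finset.sum_comm]
  refine Finset.sum_congr rfl fun c _ => ?_
  have hca : row c ≤ a (n - (c:ℕ)) := (hb c).2
  have hcn : (c:ℕ) < n := c.isLt
  have han : a (n - (c:ℕ)) ≤ a n := hmono _ _ (by omega) (by omega) (by omega)
  have h1 : ∀ r ∈ Finset.Icc 1 (a n),
      (if r ≤ a (n - (c:ℕ)) ∧ r < row c then 1 else 0) = if r < row c then 1 else 0 := by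
    intro r hr
    by_cases h : r < row c
    · have : r ≤ a (n - (c:ℕ)) := by omega
      simp [h, this]
    · simp [h]
  rw [Finset.sum_congr rfl h1, ← Finset.card_filter]
  have h2 : (Finset.Icc 1 (a n)).filter (fun r => r < row c) = Finset.Icc 1 (row c - 1) := by
    ext r
    simp only [Finset.mem_filter, Finset.mem_Icc]
    omega
  rw [h2, Nat.card_Icc]
  omega

lemma sum_sub_one_update (c : Fin n) (v : ℕ) :
    ∑ c' : Fin n, (Function.update row c v c' - 1)
      = (v - 1) + ∑ c' ∈ Finset.univ.erase c, (row c' - 1) := by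
  have h1 : (fun c' => Function.update row c v c' - 1)
      = Function.update (fun c' => row c' - 1) c (v - 1) := by
    funext c'
    by_cases h : c' = c
    · subst h; simp
    · simp [Function.update_of_ne h]
  rw [h1, Finset.sum_update_of_mem (Finset.mem_univ c)]
  rw [Finset.sdiff_singleton_eq_erase]

lemma sCells_update (hmono : ∀ i j, 1 ≤ i → i ≤ j → j ≤ n → a i ≤ a j)
    (hb : ∀ c : Fin n, 1 ≤ row c ∧ row c ≤ a (n - (c : ℕ)))
    (c : Fin n) (v : ℕ) (hv1 : 1 ≤ v) (hv2 : v ≤ a (n - (c:ℕ))) :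
    sCells a (Function.update row c v) + row c = sCells a row + v := by
  have hb' : ∀ c' : Fin n, 1 ≤ Function.update row c v c' ∧
      Function.update row c v c' ≤ a (n - (c':ℕ)) := by
    intro c'
    by_cases h : c' = c
    · subst h; rw [Function.update_self]; exact ⟨hv1, hv2⟩
    · rw [Function.update_of_ne h]; exact hb c'
  rw [sCells_eq_sum hmono hb, sCells_eq_sum hmono hb', sum_sub_one_update]
  have h2 : ∑ c' : Fin n, (row c' - 1)
      = (row c - 1) + ∑ c' ∈ Finset.univ.erase c, (row c' - 1) :=
    (Finset.add_sum_erase _ _ (Finset.mem_univ c)).symm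
  rw [h2]
  have := (hb c).1
  omega

lemma row_succ_lt (h : IsPFHS a row num) {c : Fin n} (hup : AssignedUp row num c)
    (h1 : (c:ℕ) + 1 < n) : row ⟨(c:ℕ)+1, h1⟩ < row c := by
  set d : Fin n := ⟨(c:ℕ)+1, h1⟩ with hd
  have hcd : c < d := by rw [Fin.lt_def]; simp [hd]
  have hle : row d ≤ row c := h.2.1 c d hcd.le
  rcases hle.lt_or_eq with h' | h'
  · exact h'
  have hprop := h.2.2.2.2 c d hcd h'.symm
  have hnv : nextVal num c = num d := by unfold nextVal; rw [dif_pos h1]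
  rcases hup with ⟨hlt, hodd⟩ | ⟨hlt, heven⟩
  · rw [hnv] at hlt
    have := hprop.mp hodd
    omega
  · rw [hnv] at hlt
    rw [← Nat.not_odd_iff_even] at heven
    have : ¬ num c < num d := fun hx => heven (hprop.mpr hx)
    omega

lemma two_le_row (h : IsPFHS a row num) {c : Fin n} (hup : AssignedUp row num c) :
    2 ≤ row c := by
  have h1 := (h.1 c).1
  rcases Nat.lt_or_ge ((c:ℕ)+1) n with hlt | hge
  · have hrow := row_succ_lt h hup hlt
    have := (h.1 ⟨(c:ℕ)+1, hlt⟩).1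
    omega
  · have hnv : nextVal num c = n + 1 := by unfold nextVal; rw [dif_neg (by omega)]
    have hnum := (h.2.2.1 c).2
    rcases hup with ⟨hlt2, hodd⟩ | ⟨hlt2, heven⟩
    · omega
    · rw [Nat.even_iff] at heven
      omega

lemma moveUp_valid (h : IsPFHS a row num) {c : Fin n} (hup : AssignedUp row num c) :
    IsPFHS a (Function.update row c (row c - 1)) num := by
  have h2 := two_le_row h hup
  refine ⟨?_, ?_, h.2.2.1, h.2.2.2.1, ?_⟩
  · intro c₀
    by_cases hc0 : c₀ = c
    · subst hc0
      rw [Function.update_self]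
      exact ⟨by omega, by have := (h.1 c₀).2; omega⟩
    · rw [Function.update_of_ne hc0]; exact h.1 c₀
  · intro c₁ c₂ h12
    by_cases hc2 : c₂ = c
    · subst hc2
      rw [Function.update_self]
      by_cases hc1 : c₁ = c₂
      · subst hc1; rw [Function.update_self]
      · rw [Function.update_of_ne hc1]
        have := h.2.1 c₁ c₂ h12
        omega
    · rw [Function.update_of_ne hc2]
      by_cases hc1 : c₁ = c
      · subst hc1
        rw [Function.update_self]
        have h12' : (c₁:ℕ) < (c₂:ℕ) := by
          rcases lt_or_eq_of_le h12 with h' | h'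
          · exact h'
          · exact absurd h'.symm hc2
        have hlt : (c₁:ℕ) + 1 < n := by have := c₂.isLt; omega
        have hd := row_succ_lt h hup hlt
        have hle : row c₂ ≤ row ⟨(c₁:ℕ)+1, hlt⟩ :=
          h.2.1 _ _ (by rw [Fin.le_def]; simp; omega)
        omega
      · rw [Function.update_of_ne hc1]; exact h.2.1 c₁ c₂ h12
  · intro c₁ c₂ h12 heq
    by_cases hc2 : c₂ = c
    · subst hc2
      exfalso
      have hc1 : c₁ ≠ c₂ := Fin.ne_of_lt h12
      rw [Function.update_self, Function.update_of_ne hc1] at heq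
      have := h.2.1 c₁ c₂ (le_of_lt h12)
      omega
    · by_cases hc1 : c₁ = c
      · subst hc1
        rw [Function.update_self, Function.update_of_ne hc2] at heq
        rw [Function.update_self]
        have h12' : (c₁:ℕ) < (c₂:ℕ) := h12
        have hlt : (c₁:ℕ) + 1 < n := by have := c₂.isLt; omega
        set d : Fin n := ⟨(c₁:ℕ)+1, hlt⟩ with hd
        have hdrow : row d < row c₁ := row_succ_lt h hup hlt
        have hdc2 : d ≤ c₂ := by rw [Fin.le_def]; simp [hd]; omega
        have hdge : row c₂ ≤ row d := h.2.1 d c₂ hdc2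
        have hdv : row d = row c₁ - 1 := by omega
        have hnv : nextVal num c₁ = num d := by unfold nextVal; rw [dif_pos hlt]
        have hinj : num d = num c₂ → d = c₂ := fun hx => h.2.2.2.1 hx
        rcases hup with ⟨hlt2, hodd⟩ | ⟨hlt2, heven⟩
        · have hveven : ¬ Odd (row c₁ - 1) := by
            rw [Nat.odd_iff] at hodd ⊢; omega
          have hnd : num d < num c₁ := by rw [hnv] at hlt2; exact hlt2
          have hc2d : num c₂ ≤ num d := by
            rcases eq_or_lt_of_le hdc2 with he | hl
            · rw [← he]
            · have hpr := h.2.2.2.2 d c₂ hl (by omega)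
              rw [hdv] at hpr
              have h5 : ¬ (num d < num c₂) := fun hx => hveven (hpr.mpr hx)
              omega
          constructor
          · intro hx; exact absurd hx hveven
          · intro hx; omega
        · have hvodd : Odd (row c₁ - 1) := by
            rw [Nat.even_iff] at heven
            rw [Nat.odd_iff]; omega
          have hnd : num c₁ < num d := by rw [hnv] at hlt2; exact hlt2
          have hc2d : num d ≤ num c₂ := by
            rcases eq_or_lt_of_le hdc2 with he | hl
            · rw [← he]
            · have hpr := h.2.2.2.2 d c₂ hl (by omega)
              rw [hdv] at hpr
              have h5 : num d < num c₂ := hpr.mp hvodd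
              omega
          constructor
          · intro hx; omega
          · intro hx; exact hvodd
      · rw [Function.update_of_ne hc1, Function.update_of_ne hc2] at heq
        rw [Function.update_of_ne hc1]
        exact h.2.2.2.2 c₁ c₂ h12 heq

lemma main_no_new (h : IsPFHS a row num) {c c' : Fin n} (hcc' : c < c')
    (hA : ¬ AssignedUp row num c') (hnd : ¬ MoveableDown a row num c')
    {v : ℕ} (hv : IsPFHS a (Function.update row c v) num)
    (hcase : (v = row c - 1 ∧ 2 ≤ row c) ∨
      (v = row c + 1 ∧ ¬ AssignedUp row num c)) :
    ¬ MoveableDown a (Function.update row c v) num c' := by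
  intro hmd
  obtain ⟨hA', hlt', hPF'⟩ := hmd
  have hccne : c ≠ c' := Fin.ne_of_lt hcc'
  have hc'cne : c' ≠ c := (Fin.ne_of_lt hcc').symm
  rw [Function.update_of_ne hc'cne] at hlt' hPF'
  set R := Function.update row c v with hR
  set s := row c' + 1 with hs
  set U' := Function.update R c' s with hU'
  have hU'c' : U' c' = s := by rw [hU']; simp
  have hU'c : U' c = v := by
    rw [hU', Function.update_of_ne hccne, hR]; simp
  have hU'o : ∀ x : Fin n, x ≠ c → x ≠ c' → U' x = row x := by
    intro x h1 h2
    rw [hU', Function.update_of_ne h2, hR, Function.update_of_ne h1]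
  have hanti := h.2.1
  have hbnd := h.1
  have hinj : Function.Injective num := h.2.2.2.1
  have hprop := h.2.2.2.2
  have hcv : (c:ℕ) < (c':ℕ) := hcc'
  apply hnd
  refine ⟨hA, hlt', ?_⟩
  -- goal : IsPFHS a (Function.update row c' (row c' + 1)) num
  refine ⟨?_, ?_, h.2.2.1, hinj, ?_⟩
  · intro c₀
    by_cases h0 : c₀ = c'
    · subst h0
      rw [Function.update_self]
      exact ⟨by omega, by omega⟩
    · rw [Function.update_of_ne h0]; exact hbnd c₀
  · intro c₁ c₂ h12
    by_cases h2 : c₂ = c'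
    · subst h2
      rw [Function.update_self]
      by_cases h1 : c₁ = c₂
      · subst h1; rw [Function.update_self]
      · rw [Function.update_of_ne h1]
        have h12lt : c₁ < c₂ := lt_of_le_of_ne h12 h1
        by_cases h1c : c₁ = c
        · subst h1c
          have hx : s ≤ v := by
            have hz := hPF'.2.1 c₁ c₂ h12
            rw [hU'c', hU'c] at hz
            exact hz
          rcases hcase with ⟨hveq, h2r⟩ | ⟨hveq, hnotup⟩
          · omega
          · by_contra hcon
            push_neg at hcon
            have hre : row c₁ = row c₂ := by omega
            have hp1 := hprop c₁ c₂ h12lt hre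
            have hp2 := hPF'.2.2.2.2 c₁ c₂ h12lt (by rw [hU'c', hU'c]; omega)
            rw [hU'c] at hp2
            by_cases hnum : num c₁ < num c₂
            · have o1 := hp1.mpr hnum
              have o2 := hp2.mpr hnum
              rw [Nat.odd_iff] at o1 o2
              omega
            · have o1 : ¬ Odd (row c₁) := fun hx => hnum (hp1.mp hx)
              have o2 : ¬ Odd v := fun hx => hnum (hp2.mp hx)
              rw [Nat.odd_iff] at o1 o2
              omega
        · have hz := hPF'.2.1 c₁ c₂ h12
          rw [hU'c', hU'o c₁ h1c h1] at hz
          exact hz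
    · rw [Function.update_of_ne h2]
      by_cases h1 : c₁ = c'
      · subst h1
        rw [Function.update_self]
        have := hanti c₁ c₂ h12
        omega
      · rw [Function.update_of_ne h1]; exact hanti c₁ c₂ h12
  · intro c₁ c₂ h12 heq
    by_cases h2 : c₂ = c'
    · subst h2
      have h1ne : c₁ ≠ c₂ := Fin.ne_of_lt h12
      rw [Function.update_self, Function.update_of_ne h1ne] at heq
      rw [Function.update_of_ne h1ne]
      by_cases h1c : c₁ = c
      · subst h1c
        -- HARD case : row c₁ = s, goal Odd (row c₁) ↔ num c₁ < num c₂
        rcases hcase with ⟨hveq, h2r⟩ | ⟨hveq, hnotup⟩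
        · -- case A: antitone of U' fails
          exfalso
          have hz := hPF'.2.1 c₁ c₂ h12.le
          rw [hU'c', hU'c] at hz
          omega
        · -- case B
          have hc1n : (c₁:ℕ) + 1 < n := by have := c₂.isLt; omega
          set d : Fin n := ⟨(c₁:ℕ)+1, hc1n⟩ with hd
          have hdc : d ≠ c₁ := by
            intro he; have := congrArg Fin.val he; simp [hd] at this
          have hdc2 : d ≤ c₂ := by rw [Fin.le_def]; simp [hd]; omega
          have hrd_le : row d ≤ row c₁ := hanti c₁ d (by rw [Fin.le_def]; simp [hd])
          have hrd_ge : row c₂ ≤ row d := hanti d c₂ hdc2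
          rcases eq_or_lt_of_le hrd_le with hrdeq | hrdlt
          · -- row d = row c₁ = s : chain argument
            have hdne2 : d ≠ c₂ := by
              intro he; rw [he] at hrdeq; omega
            have hdlt2 : d < c₂ := lt_of_le_of_ne hdc2 hdne2
            have hclt : c₁ < d := by rw [Fin.lt_def]; simp [hd]
            have hp1 := hprop c₁ d hclt hrdeq.symm
            have hp2 := hPF'.2.2.2.2 d c₂ hdlt2
              (by rw [hU'o d hdc hdne2, hU'c']; omega)
            rw [hU'o d hdc hdne2] at hp2
            have hne1 : num d ≠ num c₁ := fun he => hdc (hinj he)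
            have hne2 : num c₂ ≠ num d := fun he => hdne2.symm (hinj he)
            constructor
            · intro hodd
              exact lt_trans (hp1.mp hodd) (hp2.mp (by rw [hrdeq]; exact hodd))
            · intro hlt2
              by_contra hodd
              have o1 : ¬ num c₁ < num d := fun hx => hodd (hp1.mpr hx)
              have o2 : ¬ num d < num c₂ := fun hx => hodd (by rw [← hrdeq]; exact hp2.mpr hx)
              omega
          · -- row d < row c₁ hence row d = row c₂
            have hrd : row d = row c₂ := by omega
            rcases eq_or_lt_of_le hdc2 with hde | hdl
            · -- d = c₂ : use direction of c
              have hnv : nextVal num c₁ = num c₂ := by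
                unfold nextVal
                rw [dif_pos hc1n, ← hde]
              have hnum_ne : num c₁ ≠ num c₂ := fun he => h1ne (hinj he)
              unfold AssignedUp at hnotup
              push_neg at hnotup
              rw [hnv] at hnotup
              obtain ⟨hx1, hx2⟩ := hnotup
              constructor
              · intro hodd
                by_contra hlt2
                have := hx1 (by omega)
                exact this hodd
              · intro hlt2
                by_contra hodd
                have := hx2 hlt2
                rw [Nat.even_iff] at this
                rw [Nat.odd_iff] at hodd
                omega
            · -- d < c₂ : left neighbour of c₂ is in row s - 1, antitone of U' fails
              exfalso
              have hc2pos : 0 < (c₂:ℕ) := by omega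
              have hc2n : (c₂:ℕ) - 1 < n := by have := c₂.isLt; omega
              set e : Fin n := ⟨(c₂:ℕ)-1, hc2n⟩ with he
              have hdval : (d:ℕ) = (c₁:ℕ)+1 := rfl
              have hdlval : (d:ℕ) < (c₂:ℕ) := hdl
              have hde' : d ≤ e := by rw [Fin.le_def]; simp [hd, he]; omega
              have hee : e < c₂ := by rw [Fin.lt_def]; simp [he]; omega
              have hec : e ≠ c₁ := by
                intro hx; have := congrArg Fin.val hx; simp [he] at this; omega
              have hr1 : row e ≤ row d := hanti d e hde'
              have hr2 : row c₂ ≤ row e := hanti e c₂ hee.le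
              have hz := hPF'.2.1 e c₂ hee.le
              rw [hU'c', hU'o e hec (Fin.ne_of_lt hee)] at hz
              omega
      · -- c₁ ∉ {c, c'} with row c₁ = s : from hPF'
        have hp := hPF'.2.2.2.2 c₁ c₂ h12 (by rw [hU'o c₁ h1c h1ne, hU'c']; omega)
        rw [hU'o c₁ h1c h1ne] at hp
        exact hp
    · by_cases h1 : c₁ = c'
      · subst h1
        exfalso
        rw [Function.update_self, Function.update_of_ne h2] at heq
        have := hanti c₁ c₂ h12.le
        omega
      · rw [Function.update_of_ne h1, Function.update_of_ne h2] at heq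
        rw [Function.update_of_ne h1]
        exact hprop c₁ c₂ h12 heq

lemma psi_spec (hmono : ∀ i j, 1 ≤ i → i ≤ j → j ≤ n → a i ≤ a j)
    (h : IsPFHS a row num) (hne : (moveSet a row num).Nonempty) :
    IsPFHS a (psiFn a (row, num)).1 (psiFn a (row, num)).2 ∧
    (moveSet a (psiFn a (row, num)).1 (psiFn a (row, num)).2).Nonempty ∧
    psiFn a (psiFn a (row, num)) = (row, num) ∧
    psiFn a (row, num) ≠ (row, num) ∧
    (sCells a (psiFn a (row, num)).1 = sCells a row + 1 ∨
      sCells a row = sCells a (psiFn a (row, num)).1 + 1) := by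
  classical
  set c := (moveSet a row num).max' hne with hc
  have hcmem : c ∈ moveSet a row num := Finset.max'_mem _ _
  have hcmv : MoveableUp row num c ∨ MoveableDown a row num c := by
    simpa [moveSet] using hcmem
  have hrc1 : 1 ≤ row c := (h.1 c).1
  have hrca : row c ≤ a (n - (c:ℕ)) := (h.1 c).2
  have hmaxle : ∀ y ∈ moveSet a row num, y ≤ c := fun y hy => Finset.le_max' _ y hy
  by_cases hup : AssignedUp row num c
  · -- move up
    have h2 := two_le_row h hup
    have hpsi : psiFn a (row, num) = (Function.update row c (row c - 1), num) := by
      unfold psiFn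
      rw [dif_pos hne]
      show (Function.update row c (if AssignedUp row num c then row c - 1 else row c + 1), num) = _
      rw [if_pos hup]
    set R := Function.update row c (row c - 1) with hRdef
    have hRpf : IsPFHS a R num := moveUp_valid h hup
    have hRc : R c = row c - 1 := by rw [hRdef]; simp
    have hflip : AssignedUp R num c ↔ ¬ AssignedUp row num c :=
      assignedUp_parity _ (by omega) (nextVal_ne h c)
    have hnotup' : ¬ AssignedUp R num c := fun hx => (hflip.mp hx) hup
    have hback : Function.update R c (R c + 1) = row := by
      rw [hRc, hRdef, Function.update_idem]
      have : row c - 1 + 1 = row c := by omega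
      rw [this, Function.update_eq_self]
    have hcmem' : c ∈ moveSet a R num := by
      simp only [moveSet, Finset.mem_filter, Finset.mem_univ, true_and]
      right
      refine ⟨hnotup', by rw [hRc]; omega, by rw [hback]; exact h⟩
    have hne2 : (moveSet a R num).Nonempty := ⟨c, hcmem'⟩
    have hall : ∀ y ∈ moveSet a R num, y ≤ c := by
      intro y hy
      by_contra hyc
      push_neg at hyc
      have hynot : y ∉ moveSet a row num := fun hmem =>
        absurd (hmaxle y hmem) (not_le.mpr hyc)
      simp only [moveSet, Finset.mem_filter, Finset.mem_univ, true_and, not_or] at hynot hy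
      obtain ⟨hy1, hy2⟩ := hynot
      rcases hy with hyu | hyd
      · exact hy1 (by
          have := assignedUp_update_ne (Fin.ne_of_lt hyc).symm (row c - 1) (row := row) (num := num)
          exact this.mp hyu)
      · exact main_no_new h hyc hy1 hy2 hRpf (Or.inl ⟨rfl, h2⟩) hyd
    have hmax2 : (moveSet a R num).max' hne2 = c :=
      le_antisymm (Finset.max'_le _ _ _ hall) (Finset.le_max' _ _ hcmem')
    have hpsi2 : psiFn a (R, num) = (row, num) := by
      unfold psiFn
      rw [dif_pos hne2]
      show (Function.update R ((moveSet a R num).max' hne2)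
        (if AssignedUp R num ((moveSet a R num).max' hne2)
          then R ((moveSet a R num).max' hne2) - 1
          else R ((moveSet a R num).max' hne2) + 1), num) = _
      rw [hmax2, if_neg hnotup', hback]
    have hsc : sCells a R + row c = sCells a row + (row c - 1) :=
      sCells_update hmono h.1 c _ (by omega) (by omega)
    rw [hpsi]
    refine ⟨hRpf, hne2, hpsi2, ?_, ?_⟩
    · intro heq
      have := congrFun (congrArg Prod.fst heq) c
      simp only at this
      rw [hRc] at this
      omega
    · right
      show sCells a row = sCells a R + 1
      omega
  · -- move down
    have hmd : MoveableDown a row num c := by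
      rcases hcmv with hyu | hyd
      · exact absurd hyu hup
      · exact hyd
    have hpsi : psiFn a (row, num) = (Function.update row c (row c + 1), num) := by
      unfold psiFn
      rw [dif_pos hne]
      show (Function.update row c (if AssignedUp row num c then row c - 1 else row c + 1), num) = _
      rw [if_neg hup]
    set R := Function.update row c (row c + 1) with hRdef
    have hRpf : IsPFHS a R num := hmd.2.2
    have hRc : R c = row c + 1 := by rw [hRdef]; simp
    have hflip : AssignedUp R num c ↔ ¬ AssignedUp row num c :=
      assignedUp_parity _ (by omega) (nextVal_ne h c)
    have hup' : AssignedUp R num c := hflip.mpr hup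
    have hback : Function.update R c (R c - 1) = row := by
      rw [hRc, hRdef, Function.update_idem]
      have : row c + 1 - 1 = row c := by omega
      rw [this, Function.update_eq_self]
    have hcmem' : c ∈ moveSet a R num := by
      simp only [moveSet, Finset.mem_filter, Finset.mem_univ, true_and]
      exact Or.inl hup'
    have hne2 : (moveSet a R num).Nonempty := ⟨c, hcmem'⟩
    have hall : ∀ y ∈ moveSet a R num, y ≤ c := by
      intro y hy
      by_contra hyc
      push_neg at hyc
      have hynot : y ∉ moveSet a row num := fun hmem =>
        absurd (hmaxle y hmem) (not_le.mpr hyc)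
      simp only [moveSet, Finset.mem_filter, Finset.mem_univ, true_and, not_or] at hynot hy
      obtain ⟨hy1, hy2⟩ := hynot
      rcases hy with hyu | hyd
      · exact hy1 (by
          have := assignedUp_update_ne (Fin.ne_of_lt hyc).symm (row c + 1) (row := row) (num := num)
          exact this.mp hyu)
      · exact main_no_new h hyc hy1 hy2 hRpf (Or.inr ⟨rfl, hup⟩) hyd
    have hmax2 : (moveSet a R num).max' hne2 = c :=
      le_antisymm (Finset.max'_le _ _ _ hall) (Finset.le_max' _ _ hcmem')
    have hpsi2 : psiFn a (R, num) = (row, num) := by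
      unfold psiFn
      rw [dif_pos hne2]
      show (Function.update R ((moveSet a R num).max' hne2)
        (if AssignedUp R num ((moveSet a R num).max' hne2)
          then R ((moveSet a R num).max' hne2) - 1
          else R ((moveSet a R num).max' hne2) + 1), num) = _
      rw [hmax2, if_pos hup', hback]
    have hsc : sCells a R + row c = sCells a row + (row c + 1) :=
      sCells_update hmono h.1 c _ (by omega) (by exact hmd.2.1)
    rw [hpsi]
    refine ⟨hRpf, hne2, hpsi2, ?_, ?_⟩
    · intro heq
      have := congrFun (congrArg Prod.fst heq) c
      simp only at this
      rw [hRc] at this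
      omega
    · left
      show sCells a R = sCells a row + 1
      omega

lemma strips_finite (hmono : ∀ i j, 1 ≤ i → i ≤ j → j ≤ n → a i ≤ a j) :
    {H : (Fin n → ℕ) × (Fin n → ℕ) | IsPFHS a H.1 H.2}.Finite := by
  have h1 : ({f : Fin n → ℕ | ∀ c, f c ≤ a n}).Finite := by
    have : {f : Fin n → ℕ | ∀ c, f c ≤ a n}
        = Set.pi Set.univ (fun _ => Set.Iic (a n)) := by
      ext f
      simp [Set.mem_pi, Set.mem_Iic, Pi.le_def]
    rw [this]
    exact Set.Finite.pi fun _ => Set.finite_Iic _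
  have h2 : ({f : Fin n → ℕ | ∀ c, f c ≤ n}).Finite := by
    have : {f : Fin n → ℕ | ∀ c, f c ≤ n}
        = Set.pi Set.univ (fun _ => Set.Iic n) := by
      ext f
      simp [Set.mem_pi, Set.mem_Iic, Pi.le_def]
    rw [this]
    exact Set.Finite.pi fun _ => Set.finite_Iic _
  apply Set.Finite.subset (h1.prod h2)
  rintro ⟨row, num⟩ h
  constructor
  · intro c
    have hle := (h.1 c).2
    have hcn : (c:ℕ) < n := c.isLt
    have := hmono (n - (c:ℕ)) n (by omega) (by omega) (by omega)
    exact le_trans hle this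
  · intro c
    exact (h.2.2.1 c).2

lemma apf_finite (hmono : ∀ i j, 1 ≤ i → i ≤ j → j ≤ n → a i ≤ a j) :
    {b : Fin n → ℕ | IsAPF a b}.Finite := by
  have h1 : ({f : Fin n → ℕ | ∀ c, f c ≤ a n}).Finite := by
    have : {f : Fin n → ℕ | ∀ c, f c ≤ a n}
        = Set.pi Set.univ (fun _ => Set.Iic (a n)) := by
      ext f
      simp [Set.mem_pi, Set.mem_Iic, Pi.le_def]
    rw [this]
    exact Set.Finite.pi fun _ => Set.finite_Iic _
  apply Set.Finite.subset h1
  intro b hb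
  intro i
  have h2 := hb.2 ((Tuple.sort b).symm i)
  have h3 : (b ∘ Tuple.sort b) ((Tuple.sort b).symm i) = b i := by
    simp
  rw [h3] at h2
  have hlt : ((Tuple.sort b).symm i : ℕ) < n := Fin.isLt _
  calc b i ≤ a (((Tuple.sort b).symm i : ℕ) + 1) := h2
    _ ≤ a n := hmono _ _ (by omega) (by omega) (by omega)

lemma part2_sum (hmono : ∀ i j, 1 ≤ i → i ≤ j → j ≤ n → a i ≤ a j) :
    (∑ᶠ H ∈ {H : (Fin n → ℕ) × (Fin n → ℕ) |
        IsPFHS a H.1 H.2 ∧ (moveSet a H.1 H.2).Nonempty},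
      ((-1 : ℤ) ^ sCells a H.1)) = 0 := by
  classical
  have hfin : {H : (Fin n → ℕ) × (Fin n → ℕ) |
      IsPFHS a H.1 H.2 ∧ (moveSet a H.1 H.2).Nonempty}.Finite :=
    (strips_finite hmono).subset (fun H hH => hH.1)
  rw [finsum_mem_eq_finite_toFinset_sum _ hfin]
  have hmem : ∀ H, H ∈ hfin.toFinset ↔ IsPFHS a H.1 H.2 ∧ (moveSet a H.1 H.2).Nonempty := by
    intro H
    rw [Set.Finite.mem_toFinset]
    rfl
  apply Finset.sum_involution (g := fun H _ => psiFn a H)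
  · intro H ha
    obtain ⟨row, num⟩ := H
    have hH := (hmem _).mp ha
    obtain ⟨hs1, hs2, hs3, hs4, hs5⟩ := psi_spec hmono hH.1 hH.2
    rcases hs5 with h5 | h5
    · rw [h5, pow_succ]
      ring
    · rw [h5, pow_succ]
      ring
  · intro H ha _
    obtain ⟨row, num⟩ := H
    have hH := (hmem _).mp ha
    exact (psi_spec hmono hH.1 hH.2).2.2.2.1
  · intro H ha
    obtain ⟨row, num⟩ := H
    have hH := (hmem _).mp ha
    obtain ⟨hs1, hs2, hs3, hs4, hs5⟩ := psi_spec hmono hH.1 hH.2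
    exact (hmem _).mpr ⟨hs1, hs2⟩
  · intro H ha
    obtain ⟨row, num⟩ := H
    have hH := (hmem _).mp ha
    exact (psi_spec hmono hH.1 hH.2).2.2.1

end Helpers

/-- reversal permutation of `Fin n`. -/
def revP (n : ℕ) : Equiv.Perm (Fin n) :=
  Function.Involutive.toPerm (fun i => ⟨n - 1 - (i:ℕ), by have := i.isLt; omega⟩)
    (by
      intro i
      have := i.isLt
      apply Fin.ext
      show n - 1 - (n - 1 - (i:ℕ)) = (i:ℕ)
      omega)

lemma revP_val {n : ℕ} (i : Fin n) : ((revP n i : Fin n) : ℕ) = n - 1 - (i:ℕ) := rfl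

/-- The map sending a strip to its parking function. -/
noncomputable def eMap {n : ℕ} (H : (Fin n → ℕ) × (Fin n → ℕ)) : Fin n → ℕ :=
  fun i => if h : ∃ c, H.2 c = (i:ℕ)+1 then H.1 h.choose else 0

section Bij

variable {n : ℕ} {a : ℕ → ℕ} {row num : Fin n → ℕ}

lemma num_surj (h : IsPFHS a row num) (m : ℕ) (h1 : 1 ≤ m) (h2 : m ≤ n) :
    ∃ c, num c = m := by
  classical
  have hsub : Finset.image num Finset.univ ⊆ Finset.Icc 1 n := by
    intro x hx
    obtain ⟨c, -, rfl⟩ := Finset.mem_image.mp hx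
    simp only [Finset.mem_Icc]
    exact h.2.2.1 c
  have hcard : (Finset.Icc 1 n).card ≤ (Finset.image num Finset.univ).card := by
    rw [Finset.card_image_of_injective _ h.2.2.2.1, Finset.card_univ, Fintype.card_fin,
      Nat.card_Icc]
    omega
  have heq := Finset.eq_of_subset_of_card_le hsub hcard
  have : m ∈ Finset.image num Finset.univ := by
    rw [heq]
    simp only [Finset.mem_Icc]
    omega
  obtain ⟨c, -, hc⟩ := Finset.mem_image.mp this
  exact ⟨c, hc⟩

lemma eMap_spec (h : IsPFHS a row num) (i : Fin n) :
    ∃ c, num c = (i:ℕ)+1 ∧ eMap (row, num) i = row c := by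
  have hex : ∃ c, num c = (i:ℕ)+1 := num_surj h _ (by omega) (by have := i.isLt; omega)
  refine ⟨hex.choose, hex.choose_spec, ?_⟩
  unfold eMap
  rw [dif_pos hex]

lemma eMap_num (h : IsPFHS a row num) (c : Fin n) :
    eMap (row, num) ⟨num c - 1, by have := (h.2.2.1 c).2; have := (h.2.2.1 c).1; omega⟩
      = row c := by
  obtain ⟨c₀, hc₀, he⟩ := eMap_spec h ⟨num c - 1, by
    have := (h.2.2.1 c).2
    have := (h.2.2.1 c).1
    omega⟩
  have h1 : 1 ≤ num c := (h.2.2.1 c).1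
  have : num c₀ = num c := by
    rw [hc₀]
    show num c - 1 + 1 = num c
    omega
  have : c₀ = c := h.2.2.2.1 this
  rw [he, this]

lemma eMap_sorted (h : IsPFHS a row num) :
    eMap (row, num) ∘ Tuple.sort (eMap (row, num)) = fun i => row (revP n i) := by
  classical
  set b := eMap (row, num) with hb
  have hg_inj : Function.Injective (fun c : Fin n =>
      (⟨num c - 1, by have := (h.2.2.1 c).2; have := (h.2.2.1 c).1; omega⟩ : Fin n)) := by
    intro x y hxy
    apply h.2.2.2.1
    have := congrArg Fin.val hxy
    simp only at this
    have hx := (h.2.2.1 x).1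
    have hy := (h.2.2.1 y).1
    omega
  set g : Fin n → Fin n := fun c =>
    (⟨num c - 1, by have := (h.2.2.1 c).2; have := (h.2.2.1 c).1; omega⟩ : Fin n) with hg
  have hg_bij : Function.Bijective g := Finite.injective_iff_bijective.mp hg_inj
  set gE := Equiv.ofBijective g hg_bij with hgE
  set σ : Equiv.Perm (Fin n) := (revP n).trans gE with hσ
  have hcomp : b ∘ σ = fun i => row (revP n i) := by
    funext i
    show b (g (revP n i)) = row (revP n i)
    exact eMap_num h (revP n i)
  have hmono : Monotone (b ∘ σ) := by
    rw [hcomp]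
    intro i j hij
    have hval : (revP n j : ℕ) ≤ (revP n i : ℕ) := by
      rw [revP_val, revP_val]
      have : (i:ℕ) ≤ (j:ℕ) := hij
      omega
    exact h.2.1 (revP n j) (revP n i) hval
  have := Tuple.comp_sort_eq_comp_iff_monotone.mpr hmono
  rw [← this, hcomp]

lemma eMap_isAPF (h : IsPFHS a row num) : IsAPF a (eMap (row, num)) := by
  constructor
  · intro i
    obtain ⟨c, -, he⟩ := eMap_spec h i
    rw [he]
    exact (h.1 c).1
  · intro i
    rw [eMap_sorted h]
    have hi := i.isLt
    have hbnd := (h.1 (revP n i)).2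
    rw [revP_val] at hbnd
    have harg : n - (n - 1 - (i:ℕ)) = (i:ℕ) + 1 := by omega
    rw [harg] at hbnd
    exact hbnd

lemma eMap_sum (h : IsPFHS a row num) :
    ∑ i, eMap (row, num) i = ∑ c, row c := by
  classical
  have h1 : ∑ i, eMap (row, num) i
      = ∑ i, (eMap (row, num) ∘ Tuple.sort (eMap (row, num))) i :=
    (Equiv.sum_comp (Tuple.sort (eMap (row, num))) (eMap (row, num))).symm
  rw [h1]
  have h2 : ∀ i, (eMap (row, num) ∘ Tuple.sort (eMap (row, num))) i = row (revP n i) := by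
    intro i
    rw [eMap_sorted h]
  rw [Finset.sum_congr rfl (fun i _ => h2 i)]
  exact Equiv.sum_comp (revP n) row

lemma sCells_sum (hmono : ∀ i j, 1 ≤ i → i ≤ j → j ≤ n → a i ≤ a j)
    (h : IsPFHS a row num) : sCells a row + n = ∑ c, row c := by
  rw [sCells_eq_sum hmono h.1]
  have h1 : ∑ c : Fin n, row c = ∑ c : Fin n, ((row c - 1) + 1) :=
    Finset.sum_congr rfl (fun c _ => by have := (h.1 c).1; omega)
  rw [h1, Finset.sum_add_distrib]
  simp

lemma img_unique : ∀ (F : Finset (Fin n)) (f g : Fin n → ℕ),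
    (∀ x ∈ F, ∀ y ∈ F, x < y → f x < f y) →
    (∀ x ∈ F, ∀ y ∈ F, x < y → g x < g y) →
    F.image f = F.image g → ∀ x ∈ F, f x = g x := by
  classical
  intro F
  induction F using Finset.strongInduction with
  | _ F ih =>
    intro f g hf hg him x hx
    have hFne : F.Nonempty := ⟨x, hx⟩
    set m := F.max' hFne with hm
    have hmF : m ∈ F := F.max'_mem hFne
    have key : ∀ (f : Fin n → ℕ), (∀ x ∈ F, ∀ y ∈ F, x < y → f x < f y) →
        ∀ y ∈ F.image f, y ≤ f m := by
      intro f hf y hy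
      obtain ⟨z, hz, rfl⟩ := Finset.mem_image.mp hy
      rcases eq_or_lt_of_le (F.le_max' z hz) with he | hl
      · rw [he]
      · exact (hf z hz m hmF hl).le
    have hfm : f m = g m := by
      apply le_antisymm
      · have : f m ∈ F.image g := him ▸ Finset.mem_image_of_mem f hmF
        exact key g hg _ this
      · have : g m ∈ F.image f := him.symm ▸ Finset.mem_image_of_mem g hmF
        exact key f hf _ this
    by_cases hxm : x = m
    · rw [hxm, hfm]
    · have hxlt : x < m := lt_of_le_of_ne (F.le_max' x hx) hxm
      have keyer : ∀ (f : Fin n → ℕ), (∀ x ∈ F, ∀ y ∈ F, x < y → f x < f y) →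
          (F.erase m).image f = (F.image f).erase (f m) := by
        intro f hf
        ext y
        simp only [Finset.mem_image, Finset.mem_erase]
        constructor
        · rintro ⟨z, ⟨hz1, hz2⟩, rfl⟩
          have hzlt : z < m := lt_of_le_of_ne (F.le_max' z hz2) hz1
          exact ⟨(hf z hz2 m hmF hzlt).ne, z, hz2, rfl⟩
        · rintro ⟨hy1, z, hz, rfl⟩
          have : z ≠ m := fun he => hy1 (by rw [he])
          exact ⟨z, ⟨this, hz⟩, rfl⟩
      apply ih (F.erase m) (Finset.erase_ssubset hmF) f g
      · intro p hp q hq hpq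
        exact hf p (Finset.mem_of_mem_erase hp) q (Finset.mem_of_mem_erase hq) hpq
      · intro p hp q hq hpq
        exact hg p (Finset.mem_of_mem_erase hp) q (Finset.mem_of_mem_erase hq) hpq
      · rw [keyer f hf, keyer g hg, him, hfm]
      · exact Finset.mem_erase.mpr ⟨hxm, hx⟩

lemma img_unique_anti (N : ℕ) (F : Finset (Fin n)) (f g : Fin n → ℕ)
    (hfN : ∀ x ∈ F, f x ≤ N) (hgN : ∀ x ∈ F, g x ≤ N)
    (hf : ∀ x ∈ F, ∀ y ∈ F, x < y → f y < f x)
    (hg : ∀ x ∈ F, ∀ y ∈ F, x < y → g y < g x)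
    (him : F.image f = F.image g) : ∀ x ∈ F, f x = g x := by
  classical
  have h1 : ∀ x ∈ F, (fun z => N - f z) x = (fun z => N - g z) x := by
    apply img_unique F (fun z => N - f z) (fun z => N - g z)
    · intro x hx y hy hxy
      have := hf x hx y hy hxy
      have := hfN x hx
      show N - f x < N - f y
      omega
    · intro x hx y hy hxy
      have := hg x hx y hy hxy
      have := hgN x hx
      show N - g x < N - g y
      omega
    · have e1 : Finset.image (fun z => N - f z) F = Finset.image (fun z => N - z) (F.image f) := by
        rw [Finset.image_image]
        rfl
      have e2 : Finset.image (fun z => N - g z) F = Finset.image (fun z => N - z) (F.image g) := by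
        rw [Finset.image_image]
        rfl
      rw [e1, e2, him]
  intro x hx
  have e3 := h1 x hx
  have := hfN x hx
  have := hgN x hx
  simp only at e3
  omega

lemma revP_invol {n : ℕ} (c : Fin n) : revP n (revP n c) = c := by
  apply Fin.ext
  rw [revP_val, revP_val]
  have := c.isLt
  omega

lemma eMap_injOn :
    ∀ row num row' num' : Fin n → ℕ, IsPFHS a row num → IsPFHS a row' num' →
    eMap (row, num) = eMap (row', num') → row = row' ∧ num = num' := by
  intro row num row' num' h h' heq
  classical
  have hrow : row = row' := by
    funext c
    have h1 := eMap_sorted h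
    have h2 := eMap_sorted h'
    rw [heq] at h1
    have h3 : (fun i => row (revP n i)) = (fun i => row' (revP n i)) := by
      rw [← h1, ← h2]
    have h4 := congrFun h3 (revP n c)
    simp only [revP_invol] at h4
    exact h4
  subst hrow
  refine ⟨rfl, ?_⟩
  funext c
  set r := row c with hr
  set F : Finset (Fin n) := Finset.univ.filter (fun x => row x = r) with hF
  have hcF : c ∈ F := by simp [hF, hr]
  have hFmem : ∀ x ∈ F, row x = r := by
    intro x hx
    simpa [hF] using hx
  have himg : ∀ (num₀ : Fin n → ℕ), IsPFHS a row num₀ →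
      F.image num₀ = (Finset.univ.filter (fun i : Fin n => eMap (row, num₀) i = r)).image
        (fun i : Fin n => (i:ℕ)+1) := by
    intro num₀ h₀
    ext m
    simp only [Finset.mem_image, Finset.mem_filter, Finset.mem_univ, true_and, hF]
    constructor
    · rintro ⟨x, hx, rfl⟩
      refine ⟨⟨num₀ x - 1, by have := (h₀.2.2.1 x).2; have := (h₀.2.2.1 x).1; omega⟩, ?_, ?_⟩
      · rw [eMap_num h₀ x]; exact hx
      · show num₀ x - 1 + 1 = num₀ x
        have := (h₀.2.2.1 x).1
        omega
    · rintro ⟨i, hi, rfl⟩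
      obtain ⟨c₀, hc₀, he⟩ := eMap_spec h₀ i
      exact ⟨c₀, by rw [← he]; exact hi, hc₀⟩
  have himg2 : F.image num = F.image num' := by
    rw [himg num h, himg num' h', heq]
  rcases Nat.even_or_odd r with heven | hodd
  · have hnotodd : ¬ Odd r := by rw [Nat.even_iff] at heven; rw [Nat.odd_iff]; omega
    apply img_unique_anti n F num num'
      (fun x _ => (h.2.2.1 x).2) (fun x _ => (h'.2.2.1 x).2) ?_ ?_ himg2 c hcF
    · intro x hx y hy hxy
      have hp := h.2.2.2.2 x y hxy (by rw [hFmem x hx, hFmem y hy])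
      rw [hFmem x hx] at hp
      have h1 : ¬ num x < num y := fun hz => hnotodd (hp.mpr hz)
      have h2 : num x ≠ num y := fun he => (Fin.ne_of_lt hxy) (h.2.2.2.1 he)
      omega
    · intro x hx y hy hxy
      have hp := h'.2.2.2.2 x y hxy (by rw [hFmem x hx, hFmem y hy])
      rw [hFmem x hx] at hp
      have h1 : ¬ num' x < num' y := fun hz => hnotodd (hp.mpr hz)
      have h2 : num' x ≠ num' y := fun he => (Fin.ne_of_lt hxy) (h'.2.2.2.1 he)
      omega
  · apply img_unique F num num' ?_ ?_ himg2 c hcF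
    · intro x hx y hy hxy
      have hp := h.2.2.2.2 x y hxy (by rw [hFmem x hx, hFmem y hy])
      rw [hFmem x hx] at hp
      exact hp.mp hodd
    · intro x hx y hy hxy
      have hp := h'.2.2.2.2 x y hxy (by rw [hFmem x hx, hFmem y hy])
      rw [hFmem x hx] at hp
      exact hp.mp hodd

lemma surj_strip {b : Fin n → ℕ} (hb : IsAPF a b) :
    ∃ row num : Fin n → ℕ, IsPFHS a row num ∧ eMap (row, num) = b := by
  classical
  set τ := Tuple.sort b with hτ
  have hmono_bt : Monotone (b ∘ τ) := Tuple.monotone_sort b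
  have htie : ∀ i j : Fin n, i < j → b (τ i) = b (τ j) → τ i < τ j :=
    (Tuple.eq_sort_iff.mp rfl).2
  set row : Fin n → ℕ := fun c => b (τ (revP n c)) with hrow
  have hrow_anti : ∀ c c' : Fin n, c ≤ c' → row c' ≤ row c := by
    intro c c' hcc
    have hv : (revP n c' : ℕ) ≤ (revP n c : ℕ) := by
      rw [revP_val, revP_val]
      have : (c:ℕ) ≤ c' := hcc
      omega
    exact hmono_bt hv
  have hrow_bnd : ∀ c : Fin n, 1 ≤ row c ∧ row c ≤ a (n - (c:ℕ)) := by
    intro c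
    refine ⟨hb.1 _, ?_⟩
    have h2 : row c ≤ a ((revP n c : ℕ) + 1) := hb.2 (revP n c)
    have h3 : a ((revP n c : ℕ) + 1) = a (n - (c:ℕ)) := by
      congr 1
      rw [revP_val]
      have := c.isLt
      omega
    rw [h3] at h2
    exact h2
  set num₀ : Fin n → ℕ := fun c => (τ (revP n c) : ℕ) + 1 with hnum₀
  have hnum₀_inj : Function.Injective num₀ := by
    intro x y hxy
    have h1 : τ (revP n x) = τ (revP n y) := by
      apply Fin.ext
      have : (τ (revP n x) : ℕ) + 1 = (τ (revP n y) : ℕ) + 1 := hxy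
      omega
    exact (revP n).injective (τ.injective h1)
  have hnum₀_bnd : ∀ c : Fin n, 1 ≤ num₀ c ∧ num₀ c ≤ n := by
    intro c
    have := (τ (revP n c)).isLt
    constructor
    · show 1 ≤ (τ (revP n c) : ℕ) + 1
      omega
    · show (τ (revP n c) : ℕ) + 1 ≤ n
      omega
  have hnum₀_anti : ∀ x y : Fin n, x < y → row x = row y → num₀ y < num₀ x := by
    intro x y hxy hr
    have hv : revP n y < revP n x := by
      rw [Fin.lt_def, revP_val, revP_val]
      have h1 : (x:ℕ) < y := hxy
      have := y.isLt
      omega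
    have heq2 : b (τ (revP n y)) = b (τ (revP n x)) := hr.symm
    have := htie (revP n y) (revP n x) hv heq2
    show (τ (revP n y) : ℕ) + 1 < (τ (revP n x) : ℕ) + 1
    have : (τ (revP n y) : ℕ) < (τ (revP n x) : ℕ) := this
    omega
  have hFne : ∀ c : Fin n, (Finset.univ.filter (fun x => row x = row c)).Nonempty :=
    fun c => ⟨c, by simp⟩
  set lo : Fin n → Fin n :=
    fun c => (Finset.univ.filter (fun x => row x = row c)).min' (hFne c) with hlo
  set hi : Fin n → Fin n :=
    fun c => (Finset.univ.filter (fun x => row x = row c)).max' (hFne c) with hhi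
  have hlo_mem : ∀ c, row (lo c) = row c := by
    intro c
    have := Finset.min'_mem _ (hFne c)
    simpa using this
  have hhi_mem : ∀ c, row (hi c) = row c := by
    intro c
    have := Finset.max'_mem _ (hFne c)
    simpa using this
  have hmemc : ∀ c : Fin n, c ∈ Finset.univ.filter (fun x => row x = row c) := by
    intro c
    simp
  have hlo_le : ∀ c, (lo c : ℕ) ≤ (c:ℕ) := fun c => Finset.min'_le _ _ (hmemc c)
  have hle_hi : ∀ c : Fin n, (c:ℕ) ≤ (hi c : ℕ) := fun c => Finset.le_max' _ _ (hmemc c)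
  have hbetween : ∀ c x : Fin n, (lo c : ℕ) ≤ (x:ℕ) → (x:ℕ) ≤ (hi c : ℕ) → row x = row c := by
    intro c x h1 h2
    have ha1 : row x ≤ row (lo c) := hrow_anti _ _ h1
    have ha2 : row (hi c) ≤ row x := hrow_anti _ _ h2
    rw [hlo_mem] at ha1
    rw [hhi_mem] at ha2
    omega
  have hsame : ∀ c x : Fin n, row x = row c → lo x = lo c ∧ hi x = hi c := by
    intro c x hr
    have hset : (Finset.univ.filter (fun y => row y = row x))
        = (Finset.univ.filter (fun y => row y = row c)) := by
      apply Finset.filter_congr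
      intro y _
      rw [hr]
    constructor
    · apply le_antisymm
      · apply Finset.min'_le
        rw [hset]
        exact Finset.min'_mem _ (hFne c)
      · apply Finset.min'_le
        rw [← hset]
        exact Finset.min'_mem _ (hFne x)
    · apply le_antisymm
      · apply Finset.le_max'
        rw [← hset]
        exact Finset.max'_mem _ (hFne x)
      · apply Finset.le_max'
        rw [hset]
        exact Finset.max'_mem _ (hFne c)
  set ρ : Fin n → Fin n := fun c => if Odd (row c) then
      ⟨(lo c:ℕ) + (hi c:ℕ) - (c:ℕ), by
        have := (hi c).isLt
        have h1 := hlo_le c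
        have h2 := hle_hi c
        omega⟩
    else c with hρ
  have hρ_val_odd : ∀ c, Odd (row c) → (ρ c : ℕ) = (lo c:ℕ) + (hi c:ℕ) - (c:ℕ) := by
    intro c hc
    rw [hρ]
    simp only [if_pos hc]
  have hρ_val_even : ∀ c, ¬ Odd (row c) → ρ c = c := by
    intro c hc
    rw [hρ]
    simp only [if_neg hc]
  have hρ_fib : ∀ c, row (ρ c) = row c := by
    intro c
    by_cases hc : Odd (row c)
    · apply hbetween c
      · rw [hρ_val_odd c hc]
        have := hle_hi c
        omega
      · rw [hρ_val_odd c hc]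
        have := hlo_le c
        omega
    · rw [hρ_val_even c hc]
  set num : Fin n → ℕ := fun c => num₀ (ρ c) with hnum
  have hρ_inj : Function.Injective ρ := by
    intro x y hxy
    have hr : row x = row y := by rw [← hρ_fib x, ← hρ_fib y, hxy]
    obtain ⟨hl, hh⟩ := hsame y x hr
    have hlv : (lo x : ℕ) = lo y := congrArg Fin.val hl
    have hhv : (hi x : ℕ) = hi y := congrArg Fin.val hh
    by_cases ho : Odd (row x)
    · have hoy : Odd (row y) := hr ▸ ho
      have hv := congrArg Fin.val hxy
      rw [hρ_val_odd x ho, hρ_val_odd y hoy] at hv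
      apply Fin.ext
      have h1 := hlo_le x
      have h2 := hle_hi x
      have h3 := hlo_le y
      have h4 := hle_hi y
      omega
    · have hoy : ¬ Odd (row y) := fun hz => ho (hr ▸ hz)
      rw [hρ_val_even x ho, hρ_val_even y hoy] at hxy
      exact hxy
  have hprop : ∀ x y : Fin n, x < y → row x = row y → (Odd (row x) ↔ num x < num y) := by
    intro x y hxy hr
    obtain ⟨hl, hh⟩ := hsame x y hr.symm
    have hlv : (lo y : ℕ) = lo x := congrArg Fin.val hl
    have hhv : (hi y : ℕ) = hi x := congrArg Fin.val hh
    have hfibxy : row (ρ y) = row (ρ x) := by rw [hρ_fib, hρ_fib, hr]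
    rcases Nat.even_or_odd (row x) with he | ho
    · have hnotodd : ¬ Odd (row x) := by
        rw [Nat.even_iff] at he
        rw [Nat.odd_iff]
        omega
      have hnoty : ¬ Odd (row y) := fun hz => hnotodd (hr ▸ hz)
      have h1 : ρ x = x := hρ_val_even x hnotodd
      have h2 : ρ y = y := hρ_val_even y hnoty
      have hanti := hnum₀_anti x y hxy hr
      apply iff_of_false hnotodd
      show ¬ num₀ (ρ x) < num₀ (ρ y)
      rw [h1, h2]
      omega
    · have hoy : Odd (row y) := hr ▸ ho
      have hqp : ρ y < ρ x := by
        rw [Fin.lt_def, hρ_val_odd x ho, hρ_val_odd y hoy]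
        have h1 := hlo_le x
        have h2 := hle_hi y
        have h3 : (x:ℕ) < (y:ℕ) := hxy
        omega
      have hanti := hnum₀_anti (ρ y) (ρ x) hqp hfibxy
      exact iff_of_true ho hanti
  have hPF : IsPFHS a row num := by
    refine ⟨hrow_bnd, hrow_anti, fun c => hnum₀_bnd (ρ c), ?_, hprop⟩
    intro x y hxy
    exact hρ_inj (hnum₀_inj hxy)
  have hkey : ∀ (c : Fin n) (hpf : num c - 1 < n), b ⟨num c - 1, hpf⟩ = row c := by
    intro c hpf
    have hτv : (τ (revP n (ρ c)) : ℕ) = num c - 1 := by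
      show (τ (revP n (ρ c)) : ℕ) = (τ (revP n (ρ c)) : ℕ) + 1 - 1
      omega
    have hfin : (⟨num c - 1, hpf⟩ : Fin n) = τ (revP n (ρ c)) := by
      apply Fin.ext
      rw [hτv]
    rw [hfin]
    show row (ρ c) = row c
    exact hρ_fib c
  refine ⟨row, num, hPF, ?_⟩
  funext i
  obtain ⟨c₀, hc₀, he⟩ := eMap_spec hPF i
  rw [he]
  have hpf : num c₀ - 1 < n := by
    have := (hPF.2.2.1 c₀).2
    have := (hPF.2.2.1 c₀).1
    omega
  have h2 : (⟨num c₀ - 1, hpf⟩ : Fin n) = i := by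
    apply Fin.ext
    show num c₀ - 1 = (i:ℕ)
    rw [hc₀]
    omega
  rw [← h2]
  exact (hkey c₀ hpf).symm

end Bij


/-- `ψ` maps `𝓗̃_a` (the strips with at least one moveable cell) to itself, is a
fixed-point-free involution there, and changes `s(H)` by exactly `1`; consequently
`Σ_{H ∈ 𝓗̃_a} (-1)^{s(H)} = 0` and `I_a(-1) = Σ_{H ∈ 𝓗_a ∖ 𝓗̃_a} (-1)^{s(H)}`. -/
theorem stmt11 (n : ℕ) (hn : 1 ≤ n) (a : ℕ → ℕ)
    (hpos : ∀ i, 1 ≤ i → i ≤ n → 1 ≤ a i)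
    (hmono : ∀ i j, 1 ≤ i → i ≤ j → j ≤ n → a i ≤ a j) :
    (∀ H : (Fin n → ℕ) × (Fin n → ℕ),
      IsPFHS a H.1 H.2 → (moveSet a H.1 H.2).Nonempty →
        (IsPFHS a (psiFn a H).1 (psiFn a H).2 ∧
          (moveSet a (psiFn a H).1 (psiFn a H).2).Nonempty) ∧
        psiFn a (psiFn a H) = H ∧
        psiFn a H ≠ H ∧
        (sCells a (psiFn a H).1 = sCells a H.1 + 1 ∨
          sCells a H.1 = sCells a (psiFn a H).1 + 1)) ∧
    (∑ᶠ H ∈ {H : (Fin n → ℕ) × (Fin n → ℕ) |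
        IsPFHS a H.1 H.2 ∧ (moveSet a H.1 H.2).Nonempty},
      ((-1 : ℤ) ^ sCells a H.1)) = 0 ∧
    (∑ᶠ b ∈ {b : Fin n → ℕ | IsAPF a b}, ((-1 : ℤ) ^ ((∑ i, b i) - n))) =
      ∑ᶠ H ∈ {H : (Fin n → ℕ) × (Fin n → ℕ) |
          IsPFHS a H.1 H.2 ∧ ¬(moveSet a H.1 H.2).Nonempty},
        ((-1 : ℤ) ^ sCells a H.1) := by
  classical
  refine ⟨?_, part2_sum hmono, ?_⟩
  · rintro ⟨row, num⟩ hPF hne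
    obtain ⟨hs1, hs2, hs3, hs4, hs5⟩ := psi_spec hmono hPF hne
    exact ⟨⟨hs1, hs2⟩, hs3, hs4, hs5⟩
  · have hbij : Set.BijOn (eMap (n := n))
        {H : (Fin n → ℕ) × (Fin n → ℕ) | IsPFHS a H.1 H.2}
        {b : Fin n → ℕ | IsAPF a b} := by
      refine ⟨?_, ?_, ?_⟩
      · rintro ⟨row, num⟩ hH
        exact eMap_isAPF hH
      · rintro ⟨row, num⟩ hH ⟨row', num'⟩ hH' heq
        obtain ⟨h1, h2⟩ := eMap_injOn row num row' num' hH hH' heq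
        rw [h1, h2]
      · intro b hb
        obtain ⟨row, num, hPF, heq⟩ := surj_strip hb
        exact ⟨(row, num), hPF, heq⟩
    have he₁ : ∀ H ∈ {H : (Fin n → ℕ) × (Fin n → ℕ) | IsPFHS a H.1 H.2},
        ((-1 : ℤ) ^ sCells a H.1) = ((-1 : ℤ) ^ ((∑ i, eMap H i) - n)) := by
      rintro ⟨row, num⟩ hH
      have h1 : sCells a row + n = ∑ c, row c := sCells_sum hmono hH
      have h2 : ∑ i, eMap (row, num) i = ∑ c, row c := eMap_sum hH
      have h3 : (∑ i, eMap (row, num) i) - n = sCells a row := by omega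
      rw [h3]
    have hmain := finsum_mem_eq_of_bijOn
      (f := fun H : (Fin n → ℕ) × (Fin n → ℕ) => ((-1 : ℤ) ^ sCells a H.1))
      (g := fun b : Fin n → ℕ => ((-1 : ℤ) ^ ((∑ i, b i) - n)))
      (eMap (n := n)) hbij he₁
    rw [← hmain]
    have hsplit : {H : (Fin n → ℕ) × (Fin n → ℕ) | IsPFHS a H.1 H.2}
        = {H : (Fin n → ℕ) × (Fin n → ℕ) |
            IsPFHS a H.1 H.2 ∧ (moveSet a H.1 H.2).Nonempty}
          ∪ {H : (Fin n → ℕ) × (Fin n → ℕ) |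
            IsPFHS a H.1 H.2 ∧ ¬(moveSet a H.1 H.2).Nonempty} := by
      ext H
      simp only [Set.mem_setOf_eq, Set.mem_union]
      tauto
    have hdisj : Disjoint
        {H : (Fin n → ℕ) × (Fin n → ℕ) |
          IsPFHS a H.1 H.2 ∧ (moveSet a H.1 H.2).Nonempty}
        {H : (Fin n → ℕ) × (Fin n → ℕ) |
          IsPFHS a H.1 H.2 ∧ ¬(moveSet a H.1 H.2).Nonempty} := by
      rw [Set.disjoint_left]
      rintro H ⟨h1, h2⟩ ⟨h3, h4⟩
      exact h4 h2
    have hfin1 := (strips_finite hmono).subset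
      (fun H (hH : IsPFHS a H.1 H.2 ∧ (moveSet a H.1 H.2).Nonempty) => hH.1)
    have hfin2 := (strips_finite hmono).subset
      (fun H (hH : IsPFHS a H.1 H.2 ∧ ¬(moveSet a H.1 H.2).Nonempty) => hH.1)
    rw [hsplit, finsum_mem_union hdisj hfin1 hfin2, part2_sum hmono, zero_add]
end

section
/- Let a = (a_1,…,a_n) be a non-decreasing sequence of positive integers with a_1 even. Then every properly filled horizontal strip H ∈ 𝓗_a has at least one moveable cell. -/
open Finset

/-- First part of Lemma 2.3: if `a_1` is even then every properly filled horizontal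
strip in `Y_a` has at least one moveable cell, i.e. `𝓗_a - 𝓗̃_a = ∅`. -/
theorem stmt12 (n : ℕ) (hn : 1 ≤ n) (a : ℕ → ℕ)
    (hpos : ∀ i, 1 ≤ i → i ≤ n → 1 ≤ a i)
    (hmono : ∀ i j, 1 ≤ i → i ≤ j → j ≤ n → a i ≤ a j)
    (heven : Even (a 1)) :
    ∀ row num : Fin n → ℕ, IsPFHS a row num →
      ∃ c : Fin n, MoveableUp row num c ∨ MoveableDown a row num c := by
  intro row num hP
  obtain ⟨hbound, hanti, hnum, hinj, hprop⟩ := hP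
  by_cases hex : ∃ c, AssignedUp row num c
  · obtain ⟨c, hc⟩ := hex
    exact ⟨c, Or.inl hc⟩
  push_neg at hex
  have hL : n - 1 < n := by omega
  set L : Fin n := ⟨n - 1, hL⟩ with hLdef
  have hLval : (L : ℕ) = n - 1 := rfl
  have hnext : nextVal num L = n + 1 := by
    unfold nextVal
    rw [dif_neg]
    rw [hLval]
    omega
  have hLlt : num L < nextVal num L := by
    rw [hnext]; have := (hnum L).2; omega
  have hrodd : Odd (row L) := by
    have h := hex L
    unfold AssignedUp at h
    push_neg at h
    rw [← Nat.not_even_iff_odd]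
    exact h.2 hLlt
  have ha1 : row L < a 1 := by
    have hb := (hbound L).2
    have hn1 : n - (L : ℕ) = 1 := by rw [hLval]; omega
    rw [hn1] at hb
    rcases lt_or_eq_of_le hb with h | h
    · exact h
    · exfalso; rw [h] at hrodd
      exact (Nat.not_odd_iff_even.mpr heven) hrodd
  -- choose the leftmost column whose cell is in row `row L`
  have hdec : DecidablePred fun k => ∃ h : k < n, row ⟨k, h⟩ = row L :=
    fun _ => Classical.dec _
  have hPex : ∃ k, ∃ h : k < n, row ⟨k, h⟩ = row L := ⟨n - 1, hL, rfl⟩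
  obtain ⟨hmlt, hmrow⟩ := Nat.find_spec hPex
  set c : Fin n := ⟨Nat.find hPex, hmlt⟩ with hcdef
  have hcr : row c = row L := hmrow
  -- cells strictly to the left of c are in strictly lower rows
  have hleft : ∀ d : Fin n, d < c → row L + 1 ≤ row d := by
    intro d hd
    have h1 : row c ≤ row d := hanti d c (le_of_lt hd)
    have h2 : row d ≠ row L := by
      intro h
      exact Nat.find_min hPex (by exact_mod_cast hd) ⟨d.2, by rw [← h]⟩
    rw [hcr] at h1
    omega
  have hright : ∀ d : Fin n, c ≤ d → row d ≤ row L := by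
    intro d hd
    have := hanti c d hd
    omega
  have hnotup := hex c
  -- bound for moving down
  have hlen : row c + 1 ≤ a (n - (c : ℕ)) := by
    have hc2 := c.2
    have h1 : a 1 ≤ a (n - (c : ℕ)) := hmono 1 (n - (c : ℕ)) le_rfl (by omega) (by omega)
    omega
  -- key fact: any cell to the left of c in row `row L + 1` has a larger number
  have hkey : ∀ d : Fin n, d < c → row d = row L + 1 → num c < num d := by
    intro d hd hdrow
    have hdval : (d : ℕ) < (c : ℕ) := hd
    have helt : (c : ℕ) - 1 < n := by have := c.2; omega
    set e : Fin n := ⟨(c : ℕ) - 1, helt⟩ with hedef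
    have heval : (e : ℕ) = (c : ℕ) - 1 := rfl
    have hec : e < c := by
      show (e : ℕ) < (c : ℕ)
      omega
    have hde : d ≤ e := by
      show (d : ℕ) ≤ (e : ℕ)
      omega
    have herow : row e = row L + 1 := by
      have h1 := hleft e hec
      have h2 := hanti d e hde
      omega
    have hnexte : nextVal num e = num c := by
      unfold nextVal
      rw [dif_pos (by omega : (e : ℕ) + 1 < n)]
      congr 1
      apply Fin.ext
      show (e : ℕ) + 1 = (c : ℕ)
      omega
    have heven' : Even (row e) := by
      rw [herow]
      rcases hrodd with ⟨k, hk⟩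
      exact ⟨k + 1, by omega⟩
    have hce : num c < num e := by
      have h := hex e
      unfold AssignedUp at h
      push_neg at h
      have h2 := h.2
      rw [hnexte] at h2
      have hne : num e ≠ num c := fun h => (Fin.ne_of_lt hec) (hinj h)
      by_contra hcon
      push_neg at hcon
      rcases lt_or_eq_of_le hcon with h' | h'
      · exact (h2 h') heven'
      · exact hne h'
    rcases eq_or_lt_of_le (show (d : ℕ) ≤ (e : ℕ) from hde) with h' | h'
    · have : d = e := Fin.ext h'
      rw [this]; exact hce
    · have hde' : d < e := h'
      have h := hprop d e hde' (by rw [hdrow, herow])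
      rw [hdrow] at h
      have hodd : ¬ Odd (row L + 1) := by
        rw [← Nat.not_even_iff_odd]
        push_neg
        rcases hrodd with ⟨k, hk⟩
        exact ⟨k + 1, by omega⟩
      have hnd : ¬ num d < num e := fun hh => hodd (h.mpr hh)
      have hne : num e ≠ num d := fun h => (Fin.ne_of_lt hde').symm (hinj h)
      have : num e < num d := lt_of_le_of_ne (not_lt.mp hnd) hne
      omega
  refine ⟨c, Or.inr ⟨hnotup, by omega, ?_, ?_, hnum, hinj, ?_⟩⟩
  · -- bounds
    intro d
    by_cases hdc : d = c
    · subst hdc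
      rw [Function.update_self]
      exact ⟨by omega, hlen⟩
    · rw [Function.update_of_ne hdc]
      exact hbound d
  · -- antitone
    intro d d' hdd'
    by_cases h1 : d = c <;> by_cases h2 : d' = c
    · subst h1; subst h2; exact le_rfl
    · subst h1
      rw [Function.update_self, Function.update_of_ne h2]
      have hcd' : c < d' := lt_of_le_of_ne hdd' (Ne.symm h2)
      have := hright d' (le_of_lt hcd')
      rw [hcr]
      omega
    · subst h2
      rw [Function.update_self, Function.update_of_ne h1]
      have hdc : d < c := lt_of_le_of_ne hdd' h1
      have := hleft d hdc
      rw [hcr]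
      omega
    · rw [Function.update_of_ne h1, Function.update_of_ne h2]
      exact hanti d d' hdd'
  · -- properness
    intro d d' hdd' hroweq
    by_cases h1 : d = c <;> by_cases h2 : d' = c
    · exact absurd (h1.trans h2.symm) (Fin.ne_of_lt hdd')
    · subst h1
      exfalso
      rw [Function.update_self, Function.update_of_ne h2] at hroweq
      have := hright d' (le_of_lt hdd')
      rw [hcr] at hroweq
      omega
    · subst h2
      rw [Function.update_of_ne h1, Function.update_self] at hroweq
      rw [Function.update_of_ne h1]
      rw [hcr] at hroweq
      have hnum' := hkey d hdd' hroweq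
      constructor
      · intro hodd
        exfalso
        rw [hroweq] at hodd
        rcases hrodd with ⟨k, hk⟩
        rcases hodd with ⟨j, hj⟩
        omega
      · intro hlt
        omega
    · rw [Function.update_of_ne h1, Function.update_of_ne h2] at hroweq
      rw [Function.update_of_ne h1]
      exact hprop d d' hdd' hroweq
end

section
/- Let a = (a_1,…,a_n) be a non-decreasing sequence of positive integers with a_1 odd, and let S = {i ∈ [n−1] : a_{i+1} is odd}. A properly filled horizontal strip H ∈ 𝓗_a has no moveable cells if and only if the cell σ_i is at the bottom of column i for every i ∈ [n] and the permutation σ_n σ_{n−1} ⋯ σ_1 has descent set S. In particular, the number of strips in 𝓗_a with no moveable cells equals β_n(S), and every such strip H satisfies s(H) = a_1 + a_2 + ⋯ + a_n − n. -/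
open Finset

section Aux

variable {n : ℕ} {a : ℕ → ℕ} {row num : Fin n → ℕ}

lemma num_ne_nextVal_s13 (hnum : ∀ c, 1 ≤ num c ∧ num c ≤ n)
    (hinj : Function.Injective num) (c : Fin n) : num c ≠ nextVal num c := by
  unfold nextVal
  split
  · next h =>
      intro he
      have h2 := hinj he
      have h3 : (c : ℕ) = (c : ℕ) + 1 := congrArg Fin.val h2
      omega
  · next h => have := (hnum c).2; omega

lemma notAssignedUp_iff {c : Fin n} (hne : num c ≠ nextVal num c) :
    ¬AssignedUp row num c ↔ (Odd (row c) ↔ num c < nextVal num c) := by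
  unfold AssignedUp
  rcases Nat.even_or_odd (row c) with he | ho
  · have h1 : ¬ Odd (row c) := Nat.not_odd_iff_even.mpr he
    simp only [he, h1, and_true, and_false, or_false, false_or, false_iff, iff_false, not_lt,
      not_and, not_or]
    all_goals omega
  · have h1 : ¬ Even (row c) := Nat.not_even_iff_odd.mpr ho
    simp only [ho, h1, and_true, and_false, or_false, false_or, true_iff, iff_true, not_lt,
      not_and, not_or]
    all_goals omega

lemma nextVal_eq {c : Fin n} (h : (c : ℕ) + 1 < n) :
    nextVal num c = num ⟨(c : ℕ) + 1, h⟩ := by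
  unfold nextVal; rw [dif_pos h]

lemma nextVal_eq_last {c : Fin n} (h : ¬ ((c : ℕ) + 1 < n)) :
    nextVal num c = n + 1 := by
  unfold nextVal; rw [dif_neg h]

end Aux
section Aux2

variable {n : ℕ} {a : ℕ → ℕ} {row num : Fin n → ℕ}

lemma all_bottom (hpos : ∀ i, 1 ≤ i → i ≤ n → 1 ≤ a i)
    (hmono : ∀ i j, 1 ≤ i → i ≤ j → j ≤ n → a i ≤ a j)
    (hP : IsPFHS a row num)
    (hUp : ∀ c, ¬ AssignedUp row num c)
    (hDown : ∀ c, ¬ MoveableDown a row num c) :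
    ∀ c : Fin n, row c = a (n - (c : ℕ)) := by
  obtain ⟨hb, hm, hnum, hinj, hpar⟩ := hP
  have hhm : ∀ c c' : Fin n, c ≤ c' → a (n - (c' : ℕ)) ≤ a (n - (c : ℕ)) := by
    intro c c' h
    have hc := c.isLt; have hc' := c'.isLt
    have h' : (c : ℕ) ≤ (c' : ℕ) := h
    exact hmono _ _ (by omega) (by omega) (by omega)
  by_contra hcon
  push_neg at hcon
  obtain ⟨c₀, hc₀⟩ := hcon
  have hc₀lt : row c₀ < a (n - (c₀ : ℕ)) := lt_of_le_of_ne (hb c₀).2 hc₀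
  set r := row c₀ with hrdef
  classical
  have hTne : (Finset.univ.filter fun c : Fin n => row c = r).Nonempty := ⟨c₀, by simp [hrdef]⟩
  set p := (Finset.univ.filter fun c : Fin n => row c = r).min' hTne with hpdef
  have hpr : row p = r := by
    have := Finset.min'_mem _ hTne
    simpa [← hpdef] using this
  have hple : ∀ c : Fin n, row c = r → p ≤ c := by
    intro c hc
    exact Finset.min'_le _ _ (by simp [hc])
  have hpc₀ : p ≤ c₀ := hple c₀ rfl
  have hleft : ∀ c : Fin n, c < p → r + 1 ≤ row c := by
    intro c hc
    have h1 : row p ≤ row c := hm c p (le_of_lt hc)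
    have h2 : row c ≠ r := fun he => absurd (hple c he) (not_le.mpr hc)
    omega
  have hhp : r + 1 ≤ a (n - (p : ℕ)) := lt_of_lt_of_le hc₀lt (hhm p c₀ hpc₀)
  by_cases hstep : ∀ c : Fin n, c < p → row c = r + 1 → (Odd (r + 1) ↔ num c < num p)
  · -- p is moveable down: contradiction with hDown
    apply hDown p
    refine ⟨hUp p, by omega, ?_, ?_, hnum, hinj, ?_⟩
    · -- bounds
      intro c
      rcases eq_or_ne c p with hcp | hcp
      · subst hcp
        rw [Function.update_self]
        exact ⟨by omega, by omega⟩
      · rw [Function.update_of_ne hcp]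
        exact hb c
    · -- monotone
      intro c c' hle
      rcases eq_or_ne c p with h1 | h1
      · subst h1
        rcases eq_or_ne c' p with h2 | h2
        · subst h2; exact le_refl _
        · rw [Function.update_of_ne h2, Function.update_self]
          have := hm p c' hle
          omega
      · rcases eq_or_ne c' p with h2 | h2
        · subst h2
          rw [Function.update_of_ne h1, Function.update_self]
          have := hleft c (lt_of_le_of_ne hle h1)
          omega
        · rw [Function.update_of_ne h1, Function.update_of_ne h2]
          exact hm c c' hle
    · -- parity
      intro c c' hlt heq
      rcases eq_or_ne c p with h1 | h1
      · subst h1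
        have h2 : c' ≠ p := ne_of_gt hlt
        rw [Function.update_self] at heq
        rw [Function.update_of_ne h2] at heq
        have h3 : row c' ≤ r := hpr ▸ hm p c' (le_of_lt hlt)
        exfalso; omega
      · rcases eq_or_ne c' p with h2 | h2
        · subst h2
          rw [Function.update_of_ne h1, Function.update_self] at heq
          rw [Function.update_of_ne h1]
          have hrc : row c = r + 1 := by omega
          rw [hrc]
          exact hstep c hlt hrc
        · rw [Function.update_of_ne h1, Function.update_of_ne h2] at heq
          rw [Function.update_of_ne h1]
          exact hpar c c' hlt heq
  · -- some cell left of p in row r+1 with bad parity: the cell p-1 is assigned up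
    push_neg at hstep
    obtain ⟨c, hclt, hcrow, hcbad⟩ := hstep
    have hclt' : (c : ℕ) < (p : ℕ) := hclt
    have hpn := p.isLt
    set q : Fin n := ⟨(p : ℕ) - 1, by omega⟩ with hqdef
    have hcq : (c : ℕ) ≤ (q : ℕ) := by simp [hqdef]; omega
    have hqp : q < p := by
      rw [Fin.lt_def]; simp [hqdef]; omega
    have hqrow : row q = r + 1 := by
      have h1 : row q ≤ row c := hm c q (by rw [Fin.le_def]; exact hcq)
      have h2 := hleft q hqp
      omega
    have hq1 : ((q : ℕ) + 1) < n := by simp [hqdef]; omega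
    have hnext : nextVal num q = num p := by
      rw [nextVal_eq hq1]
      congr 1
      apply Fin.ext
      simp [hqdef]; omega
    have hcnep : num c ≠ num p := fun h => (ne_of_lt hclt) (hinj h)
    have hAq : AssignedUp row num q := by
      rcases Nat.even_or_odd (r + 1) with he | ho
      · -- even: num c < num p, and num q < num c (or q = c)
        have hno : ¬ Odd (r + 1) := Nat.not_odd_iff_even.mpr he
        have hcp : num c < num p := by
          rcases hcbad with ⟨h, _⟩ | ⟨_, h⟩
          · exact absurd h hno
          · exact h
        have hqc : num q ≤ num c := by
          rcases eq_or_lt_of_le hcq with h | h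
          · have : c = q := Fin.ext h
            rw [this]
          · have hcqf : c < q := by rw [Fin.lt_def]; exact h
            have := hpar c q hcqf (by omega)
            rw [hcrow] at this
            have h4 : ¬ num c < num q := fun hh => hno (this.mpr hh)
            omega
        exact Or.inr ⟨by rw [hnext]; omega, by rw [hqrow]; exact he⟩
      · -- odd: num p < num c, and num c ≤ num q
        have hpc : num p < num c := by
          rcases hcbad with ⟨_, h⟩ | ⟨h, _⟩
          · omega
          · exact absurd ho h
        have hcqv : num c ≤ num q := by
          rcases eq_or_lt_of_le hcq with h | h
          · have : c = q := Fin.ext h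
            rw [this]
          · have hcqf : c < q := by rw [Fin.lt_def]; exact h
            have := hpar c q hcqf (by omega)
            rw [hcrow] at this
            have := this.mp ho
            omega
        exact Or.inl ⟨by rw [hnext]; omega, by rw [hqrow]; exact ho⟩
    exact hUp q hAq

end Aux2
section Aux3

variable {n : ℕ} {a : ℕ → ℕ}

lemma part1 (hn : 1 ≤ n)
    (hpos : ∀ i, 1 ≤ i → i ≤ n → 1 ≤ a i)
    (hmono : ∀ i j, 1 ≤ i → i ≤ j → j ≤ n → a i ≤ a j)
    (hodd : Odd (a 1))
    (S : Finset ℕ) (hSdef : S = (Finset.Icc 1 (n - 1)).filter fun i => Odd (a (i + 1)))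
    (row num : Fin n → ℕ) (hP : IsPFHS a row num) :
    (∀ c : Fin n, ¬(MoveableUp row num c ∨ MoveableDown a row num c)) ↔
      ((∀ c : Fin n, row c = a (n - (c : ℕ))) ∧
        ∀ i, ∀ h1 : 1 ≤ i, ∀ h2 : i ≤ n - 1,
          (i ∈ S ↔ num ⟨n - i - 1, by have := h1; omega⟩ < num ⟨n - i, by have := h1; omega⟩)) := by
  constructor
  · intro hno
    have hUp : ∀ c, ¬ AssignedUp row num c := fun c h => hno c (Or.inl h)
    have hDown : ∀ c, ¬ MoveableDown a row num c := fun c h => hno c (Or.inr h)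
    have hbot := all_bottom hpos hmono hP hUp hDown
    refine ⟨hbot, ?_⟩
    intro i h1 h2
    have hi1 : n - i - 1 < n := by omega
    have hi2 : n - i < n := by omega
    have hc1 : (n - i - 1) + 1 < n := by omega
    have hnv : nextVal num ⟨n - i - 1, hi1⟩ = num ⟨n - i, hi2⟩ := by
      rw [nextVal_eq (c := ⟨n - i - 1, hi1⟩) hc1]
      congr 1
      apply Fin.ext
      simp only []
      omega
    have hna := (notAssignedUp_iff
      (num_ne_nextVal_s13 hP.2.2.1 hP.2.2.2.1 ⟨n - i - 1, hi1⟩)).mp (hUp _)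
    rw [hnv] at hna
    have hrc : row (⟨n - i - 1, hi1⟩ : Fin n) = a (i + 1) := by
      rw [hbot ⟨n - i - 1, hi1⟩]
      congr 1
      simp only []
      omega
    rw [hrc] at hna
    rw [hSdef, Finset.mem_filter, Finset.mem_Icc]
    exact ⟨fun hmem => hna.mp hmem.2, fun hlt => ⟨⟨h1, h2⟩, hna.mpr hlt⟩⟩
  · rintro ⟨hbot, hdesc⟩ c hcon
    have hne := num_ne_nextVal_s13 hP.2.2.1 hP.2.2.2.1 c
    rcases hcon with hup | hdn
    · refine (notAssignedUp_iff hne).mpr ?_ hup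
      have hcn := c.isLt
      by_cases hc1 : (c : ℕ) + 1 < n
      · set i := n - 1 - (c : ℕ) with hidef
        have h1 : 1 ≤ i := by omega
        have h2 : i ≤ n - 1 := by omega
        have hd := hdesc i h1 h2
        have e1 : (⟨n - i - 1, by omega⟩ : Fin n) = c := Fin.ext (by simp only []; omega)
        rw [e1] at hd
        have hnv : nextVal num c = num ⟨n - i, by omega⟩ := by
          rw [nextVal_eq hc1]
          congr 1
          apply Fin.ext
          simp only []
          omega
        rw [hnv]
        rw [hSdef, Finset.mem_filter, Finset.mem_Icc] at hd
        have hrc : row c = a (i + 1) := by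
          rw [hbot c]
          congr 1
          omega
        rw [hrc]
        exact ⟨fun ho => hd.mp ⟨⟨h1, h2⟩, ho⟩, fun hlt => (hd.mpr hlt).2⟩
      · rw [nextVal_eq_last hc1]
        have hrc : row c = a 1 := by
          rw [hbot c]
          congr 1
          omega
        rw [hrc]
        have := (hP.2.2.1 c).2
        exact iff_of_true hodd (by omega)
    · have h := hdn.2.1
      rw [hbot c] at h
      exact lt_irrefl _ h

end Aux3
section Aux4

variable {n : ℕ} {a : ℕ → ℕ}

lemma sum_reindex (hn : 1 ≤ n) (f : ℕ → ℕ) :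
    ∑ c : Fin n, f (n - (c : ℕ)) = ∑ i ∈ Finset.Icc 1 n, f i := by
  rw [Fin.sum_univ_eq_sum_range (fun j => f (n - j))]
  rw [← Finset.Ico_add_one_right_eq_Icc, Finset.sum_Ico_eq_sum_range]
  simp only [Nat.add_sub_cancel]
  rw [← Finset.sum_range_reflect (fun i => f (1 + i)) n]
  apply Finset.sum_congr rfl
  intro j hj
  rw [Finset.mem_range] at hj
  congr 1
  omega

lemma part3 (hn : 1 ≤ n)
    (hpos : ∀ i, 1 ≤ i → i ≤ n → 1 ≤ a i)
    (hmono : ∀ i j, 1 ≤ i → i ≤ j → j ≤ n → a i ≤ a j)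
    (row : Fin n → ℕ) (hbot : ∀ c : Fin n, row c = a (n - (c : ℕ))) :
    sCells a row = (∑ i ∈ Finset.Icc 1 n, a i) - n := by
  classical
  have e1 : ∀ c : Fin n, (∑ r ∈ Finset.Icc 1 (a n),
      if r ≤ a (n - (c : ℕ)) ∧ r < row c then 1 else 0) = a (n - (c : ℕ)) - 1 := by
    intro c
    rw [← Finset.card_filter]
    have hcc := c.isLt
    have hha : a (n - (c : ℕ)) ≤ a n := hmono _ _ (by omega) (by omega) (le_refl n)
    have hh1 : 1 ≤ a (n - (c : ℕ)) := hpos _ (by omega) (by omega)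
    have e0 : (Finset.Icc 1 (a n)).filter (fun r => r ≤ a (n - (c : ℕ)) ∧ r < row c)
        = Finset.Icc 1 (a (n - (c : ℕ)) - 1) := by
      ext r
      rw [Finset.mem_filter, Finset.mem_Icc, Finset.mem_Icc, hbot c]
      omega
    rw [e0, Nat.card_Icc]
    omega
  unfold sCells
  rw [Finset.card_filter, Finset.sum_product, Finset.sum_comm]
  have e2 : (∑ c : Fin n, ∑ r ∈ Finset.Icc 1 (a n),
      if r ≤ a (n - (c : ℕ)) ∧ r < row c then 1 else 0) = ∑ c : Fin n, (a (n - (c : ℕ)) - 1) :=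
    Finset.sum_congr rfl (fun c _ => e1 c)
  rw [e2]
  have e3 : ∑ c : Fin n, (a (n - (c : ℕ)) - 1) = ∑ i ∈ Finset.Icc 1 n, (a i - 1) :=
    sum_reindex hn (fun i => a i - 1)
  have e5 : ∑ i ∈ Finset.Icc 1 n, (a i - 1) + ∑ i ∈ Finset.Icc 1 n, 1
      = ∑ i ∈ Finset.Icc 1 n, a i := by
    rw [← Finset.sum_add_distrib]
    apply Finset.sum_congr rfl
    intro i hi
    rw [Finset.mem_Icc] at hi
    have := hpos i hi.1 hi.2
    omega
  have e6 : (∑ _i ∈ Finset.Icc 1 n, (1 : ℕ)) = n := by simp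
  omega

end Aux4
section Aux5

variable {n : ℕ} {a : ℕ → ℕ}

lemma chain (hmono : ∀ i j, 1 ≤ i → i ≤ j → j ≤ n → a i ≤ a j)
    (num : Fin n → ℕ) (hinj : Function.Injective num)
    (hstep : ∀ (c c' : Fin n), (c' : ℕ) = (c : ℕ) + 1 →
      (Odd (a (n - (c : ℕ))) ↔ num c < num c')) :
    ∀ c c' : Fin n, c < c' → a (n - (c : ℕ)) = a (n - (c' : ℕ)) →
      (Odd (a (n - (c : ℕ))) ↔ num c < num c') := by
  have key : ∀ m : ℕ, ∀ (hmn : m < n), ∀ c : Fin n, (c : ℕ) < m →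
      a (n - (c : ℕ)) = a (n - m) → (Odd (a (n - (c : ℕ))) ↔ num c < num ⟨m, hmn⟩) := by
    intro m
    induction m with
    | zero => intro _ c hc; exact absurd hc (Nat.not_lt_zero _)
    | succ m ih =>
      intro hmn c hc heq
      rcases eq_or_lt_of_le (Nat.lt_succ_iff.mp hc) with h | h
      · exact hstep c ⟨m + 1, hmn⟩ (by simp [← h])
      · have hmn' : m < n := by omega
        have hc2 := c.isLt
        have ha1 : a (n - (m + 1)) ≤ a (n - m) := hmono _ _ (by omega) (by omega) (by omega)
        have ha2 : a (n - m) ≤ a (n - (c : ℕ)) := hmono _ _ (by omega) (by omega) (by omega)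
        have heq1 : a (n - (c : ℕ)) = a (n - m) := by omega
        have h1 := ih hmn' c h heq1
        have h2 := hstep ⟨m, hmn'⟩ ⟨m + 1, hmn⟩ rfl
        simp only [] at h2
        rw [← heq1] at h2
        have hne1 : num c ≠ num ⟨m, hmn'⟩ := fun he => by
          have := hinj he
          have : (c : ℕ) = m := congrArg Fin.val this
          omega
        have hne2 : num ⟨m, hmn'⟩ ≠ num ⟨m + 1, hmn⟩ := fun he => by
          have := hinj he
          have : m = m + 1 := congrArg Fin.val this
          omega
        rcases Nat.even_or_odd (a (n - (c : ℕ))) with he | ho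
        · have hno : ¬ Odd (a (n - (c : ℕ))) := Nat.not_odd_iff_even.mpr he
          have k1 : ¬ num c < num ⟨m, hmn'⟩ := fun hh => hno (h1.mpr hh)
          have k2 : ¬ num ⟨m, hmn'⟩ < num ⟨m + 1, hmn⟩ := fun hh => hno (h2.mpr hh)
          exact iff_of_false hno (by omega)
        · have k1 : num c < num ⟨m, hmn'⟩ := h1.mp ho
          have k2 : num ⟨m, hmn'⟩ < num ⟨m + 1, hmn⟩ := h2.mp ho
          exact iff_of_true ho (by omega)
  intro c c' hlt heq
  have hc' := c'.isLt
  have h := key (c' : ℕ) hc' c hlt (by rw [heq])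
  have e : (⟨(c' : ℕ), hc'⟩ : Fin n) = c' := Fin.ext rfl
  rw [e] at h
  exact h

lemma build_PFHS (hpos : ∀ i, 1 ≤ i → i ≤ n → 1 ≤ a i)
    (hmono : ∀ i j, 1 ≤ i → i ≤ j → j ≤ n → a i ≤ a j)
    (num : Fin n → ℕ)
    (hnum : ∀ c, 1 ≤ num c ∧ num c ≤ n) (hinj : Function.Injective num)
    (hstep : ∀ (c c' : Fin n), (c' : ℕ) = (c : ℕ) + 1 →
      (Odd (a (n - (c : ℕ))) ↔ num c < num c')) :
    IsPFHS a (fun c => a (n - (c : ℕ))) num := by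
  refine ⟨?_, ?_, hnum, hinj, ?_⟩
  · intro c
    have := c.isLt
    exact ⟨hpos _ (by omega) (by omega), le_refl _⟩
  · intro c c' hle
    have hc := c.isLt; have hc' := c'.isLt
    have h' : (c : ℕ) ≤ (c' : ℕ) := hle
    exact hmono _ _ (by omega) (by omega) (by omega)
  · intro c c' hlt heq
    exact chain hmono num hinj hstep c c' hlt heq

end Aux5
section Aux6

variable {n : ℕ} {a : ℕ → ℕ}

lemma part2 (hn : 1 ≤ n)
    (hpos : ∀ i, 1 ≤ i → i ≤ n → 1 ≤ a i)
    (hmono : ∀ i j, 1 ≤ i → i ≤ j → j ≤ n → a i ≤ a j)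
    (hodd : Odd (a 1))
    (S : Finset ℕ) (hSdef : S = (Finset.Icc 1 (n - 1)).filter fun i => Odd (a (i + 1))) :
    Nat.card {H : (Fin n → ℕ) × (Fin n → ℕ) //
        IsPFHS a H.1 H.2 ∧ ∀ c : Fin n, ¬(MoveableUp H.1 H.2 c ∨ MoveableDown a H.1 H.2 c)}
      = betaN n S := by
  classical
  have hp1 := part1 hn hpos hmono hodd S hSdef
  set colIdx : Fin n → Fin n := (fun j => ⟨n - 1 - (j : ℕ), by omega⟩) with hcoldef
  have hcol : ∀ j : Fin n, (colIdx j : ℕ) = n - 1 - (j : ℕ) := fun j => rfl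
  have hcolinv : ∀ j : Fin n, colIdx (colIdx j) = j := by
    intro j
    have := j.isLt
    apply Fin.ext
    rw [hcol, hcol]
    omega
  set fval : (Fin n → ℕ) → Fin n → Fin n :=
    (fun num j => ⟨min (num (colIdx j) - 1) (n - 1), by omega⟩) with hfdef
  have hfval : ∀ (num : Fin n → ℕ), (∀ c, 1 ≤ num c ∧ num c ≤ n) → ∀ j : Fin n,
      (fval num j : ℕ) = num (colIdx j) - 1 := by
    intro num hnum j
    have h1 := hnum (colIdx j)
    show min (num (colIdx j) - 1) (n - 1) = num (colIdx j) - 1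
    omega
  have hbij : ∀ (num : Fin n → ℕ), (∀ c, 1 ≤ num c ∧ num c ≤ n) →
      Function.Injective num → Function.Bijective (fval num) := by
    intro num hnum hinj
    refine Finite.injective_iff_bijective.mp ?_
    intro j j' he
    have e1 : (fval num j : ℕ) = (fval num j' : ℕ) := congrArg Fin.val he
    rw [hfval num hnum j, hfval num hnum j'] at e1
    have h1 := hnum (colIdx j)
    have h2 := hnum (colIdx j')
    have e2 : num (colIdx j) = num (colIdx j') := by omega
    have e4 : (colIdx j : ℕ) = (colIdx j' : ℕ) := congrArg Fin.val (hinj e2)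
    rw [hcol, hcol] at e4
    have := j.isLt
    have := j'.isLt
    exact Fin.ext (by omega)
  have hdescF : ∀ (num : Fin n → ℕ) (hnum : ∀ c, 1 ≤ num c ∧ num c ≤ n)
      (hbj : Function.Bijective (fval num)),
      (∀ i, ∀ h1 : 1 ≤ i, ∀ h2 : i ≤ n - 1,
        (i ∈ S ↔ num ⟨n - i - 1, by omega⟩ < num ⟨n - i, by omega⟩)) →
      descSet (Equiv.ofBijective (fval num) hbj) = S := by
    intro num hnum hbj hd
    ext i
    rw [hSdef]
    simp only [descSet, Finset.mem_filter, Finset.mem_Icc]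
    by_cases hi : 1 ≤ i ∧ i ≤ n - 1
    · obtain ⟨h1, h2⟩ := hi
      have hin : i < n := by omega
      have hin2 : i - 1 < n := by omega
      have hpv1 : permVal (Equiv.ofBijective (fval num) hbj) i = num ⟨n - i - 1, by omega⟩ - 1 := by
        unfold permVal
        rw [dif_pos hin]
        rw [show ((Equiv.ofBijective (fval num) hbj) ⟨i, hin⟩ : ℕ) = (fval num ⟨i, hin⟩ : ℕ)
          from rfl]
        rw [hfval num hnum]
        have e : colIdx ⟨i, hin⟩ = ⟨n - i - 1, by omega⟩ := Fin.ext (by rw [hcol]; simp only [Fin.val_mk]; omega)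
        rw [e]
      have hpv0 : permVal (Equiv.ofBijective (fval num) hbj) (i - 1)
          = num ⟨n - i, by omega⟩ - 1 := by
        unfold permVal
        rw [dif_pos hin2]
        rw [show ((Equiv.ofBijective (fval num) hbj) ⟨i - 1, hin2⟩ : ℕ)
          = (fval num ⟨i - 1, hin2⟩ : ℕ) from rfl]
        rw [hfval num hnum]
        have e : colIdx ⟨i - 1, hin2⟩ = ⟨n - i, by omega⟩ := Fin.ext (by rw [hcol]; simp only [Fin.val_mk]; omega)
        rw [e]
      have hd' := hd i h1 h2
      rw [hSdef, Finset.mem_filter, Finset.mem_Icc] at hd'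
      have hb1 := hnum ⟨n - i - 1, by omega⟩
      have hb2 := hnum ⟨n - i, by omega⟩
      rw [hpv1, hpv0]
      constructor
      · rintro ⟨hii, hlt⟩
        refine ⟨hii, ?_⟩
        exact (hd'.mpr (by omega)).2
      · rintro ⟨hii, ho⟩
        refine ⟨hii, ?_⟩
        have := hd'.mp ⟨hii, ho⟩
        omega
    · exact iff_of_false (fun h => hi h.1) (fun h => hi h.1)
  have hb : betaN n S = Nat.card {σ : Equiv.Perm (Fin n) // descSet σ = S} := by
    rw [Nat.card_eq_fintype_card, Fintype.card_subtype]
    rfl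
  rw [hb]
  apply Nat.card_eq_of_bijective
    (fun H => ⟨Equiv.ofBijective (fval H.1.2) (hbij _ H.2.1.2.2.1 H.2.1.2.2.2.1),
      hdescF _ H.2.1.2.2.1 _ ((hp1 H.1.1 H.1.2 H.2.1).mp H.2.2).2⟩)
  constructor
  · -- injective
    rintro ⟨⟨row1, num1⟩, hP1, hm1⟩ ⟨⟨row2, num2⟩, hP2, hm2⟩ he
    have he1 : Equiv.ofBijective (fval num1) (hbij _ hP1.2.2.1 hP1.2.2.2.1)
        = Equiv.ofBijective (fval num2) (hbij _ hP2.2.2.1 hP2.2.2.2.1) :=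
      congrArg Subtype.val he
    have he2 : ∀ j, fval num1 j = fval num2 j :=
      fun j => congrArg (fun e : Equiv.Perm (Fin n) => e j) he1
    have hnumeq : num1 = num2 := by
      funext c
      have h1 : 1 ≤ num1 (colIdx (colIdx c)) ∧ num1 (colIdx (colIdx c)) ≤ n :=
        hP1.2.2.1 (colIdx (colIdx c))
      have h2 : 1 ≤ num2 (colIdx (colIdx c)) ∧ num2 (colIdx (colIdx c)) ≤ n :=
        hP2.2.2.1 (colIdx (colIdx c))
      have e1 : (fval num1 (colIdx c) : ℕ) = num1 (colIdx (colIdx c)) - 1 :=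
        hfval num1 hP1.2.2.1 (colIdx c)
      have e2 : (fval num2 (colIdx c) : ℕ) = num2 (colIdx (colIdx c)) - 1 :=
        hfval num2 hP2.2.2.1 (colIdx c)
      rw [he2 (colIdx c)] at e1
      rw [hcolinv c] at h1 h2 e1 e2
      omega
    have hroweq : row1 = row2 := by
      funext c
      have hb1 := ((hp1 row1 num1 hP1).mp hm1).1 c
      have hb2 := ((hp1 row2 num2 hP2).mp hm2).1 c
      rw [hb1, hb2]
    apply Subtype.ext
    show (row1, num1) = (row2, num2)
    rw [hnumeq, hroweq]
  · -- surjective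
    rintro ⟨σ, hσ⟩
    set num : Fin n → ℕ := fun c => (σ (colIdx c) : ℕ) + 1 with hnumdef
    have hnum : ∀ c, 1 ≤ num c ∧ num c ≤ n := by
      intro c
      have := (σ (colIdx c)).isLt
      show 1 ≤ (σ (colIdx c) : ℕ) + 1 ∧ (σ (colIdx c) : ℕ) + 1 ≤ n
      omega
    have hinjnum : Function.Injective num := by
      intro c c' he
      have e1 : (σ (colIdx c) : ℕ) = (σ (colIdx c') : ℕ) := by
        have : (σ (colIdx c) : ℕ) + 1 = (σ (colIdx c') : ℕ) + 1 := he
        omega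
      have e2 : colIdx c = colIdx c' := σ.injective (Fin.ext e1)
      have e3 : (colIdx c : ℕ) = (colIdx c' : ℕ) := congrArg Fin.val e2
      rw [hcol, hcol] at e3
      have := c.isLt
      have := c'.isLt
      exact Fin.ext (by omega)
    have hdesc2 : ∀ i, ∀ h1 : 1 ≤ i, ∀ h2 : i ≤ n - 1,
        (i ∈ S ↔ num ⟨n - i - 1, by omega⟩ < num ⟨n - i, by omega⟩) := by
      intro i h1 h2
      have hin : i < n := by omega
      have hin2 : i - 1 < n := by omega
      have e1 : colIdx ⟨n - i - 1, by omega⟩ = ⟨i, hin⟩ := Fin.ext (by rw [hcol]; simp only [Fin.val_mk]; omega)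
      have e2 : colIdx ⟨n - i, by omega⟩ = ⟨i - 1, hin2⟩ := Fin.ext (by rw [hcol]; simp only [Fin.val_mk]; omega)
      have lhs1 : num ⟨n - i - 1, by omega⟩ = (σ ⟨i, hin⟩ : ℕ) + 1 := by
        show (σ (colIdx ⟨n - i - 1, by omega⟩) : ℕ) + 1 = _
        rw [e1]
      have lhs2 : num ⟨n - i, by omega⟩ = (σ ⟨i - 1, hin2⟩ : ℕ) + 1 := by
        show (σ (colIdx ⟨n - i, by omega⟩) : ℕ) + 1 = _
        rw [e2]
      rw [lhs1, lhs2, ← hσ]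
      simp only [descSet, Finset.mem_filter, Finset.mem_Icc]
      unfold permVal
      rw [dif_pos hin, dif_pos hin2]
      constructor
      · rintro ⟨_, h⟩; omega
      · intro h; exact ⟨⟨h1, h2⟩, by omega⟩
    have hstep : ∀ (c c' : Fin n), (c' : ℕ) = (c : ℕ) + 1 →
        (Odd (a (n - (c : ℕ))) ↔ num c < num c') := by
      intro c c' hcc
      have hc' := c'.isLt
      have hc := c.isLt
      set i := n - 1 - (c : ℕ) with hidef
      have h1 : 1 ≤ i := by omega
      have h2 : i ≤ n - 1 := by omega
      have hd := hdesc2 i h1 h2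
      have e1 : (⟨n - i - 1, by omega⟩ : Fin n) = c := Fin.ext (by simp only [Fin.val_mk]; omega)
      have e2 : (⟨n - i, by omega⟩ : Fin n) = c' := Fin.ext (by simp only [Fin.val_mk]; omega)
      rw [e1, e2] at hd
      have e3 : a (i + 1) = a (n - (c : ℕ)) := by
        congr 1
        omega
      rw [hSdef, Finset.mem_filter, Finset.mem_Icc] at hd
      rw [e3] at hd
      exact ⟨fun ho => hd.mp ⟨⟨h1, h2⟩, ho⟩, fun hlt => (hd.mpr hlt).2⟩
    have hP : IsPFHS a (fun c => a (n - (c : ℕ))) num :=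
      build_PFHS hpos hmono num hnum hinjnum hstep
    have hnomove := (hp1 _ num hP).mpr ⟨fun c => rfl, hdesc2⟩
    refine ⟨⟨(fun c => a (n - (c : ℕ)), num), hP, hnomove⟩, ?_⟩
    apply Subtype.ext
    show Equiv.ofBijective (fval num) (hbij num hP.2.2.1 hP.2.2.2.1) = σ
    apply Equiv.ext
    intro j
    apply Fin.ext
    show (fval num j : ℕ) = (σ j : ℕ)
    rw [hfval num hnum j]
    show (σ (colIdx (colIdx j)) : ℕ) + 1 - 1 = (σ j : ℕ)
    rw [hcolinv j]
    omega

end Aux6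
/-- Second part of Lemma 2.3: for `a_1` odd and `S = {i ∈ [n-1] : a_{i+1} odd}`,
a strip `H ∈ 𝓗_a` has no moveable cells iff every cell is at the bottom of its column
and the word `σ_n σ_{n-1} ⋯ σ_1` has descent set `S` (a descent of this word at
position `i` means `σ_{n+1-i} > σ_{n-i}`).  Consequently the number of such strips is
`β_n(S)`, and each of them satisfies `s(H) = a_1 + ⋯ + a_n - n`. -/
theorem stmt13 (n : ℕ) (hn : 1 ≤ n) (a : ℕ → ℕ)
    (hpos : ∀ i, 1 ≤ i → i ≤ n → 1 ≤ a i)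
    (hmono : ∀ i j, 1 ≤ i → i ≤ j → j ≤ n → a i ≤ a j)
    (hodd : Odd (a 1))
    (S : Finset ℕ) (hSdef : S = (Finset.Icc 1 (n - 1)).filter fun i => Odd (a (i + 1))) :
    (∀ row num : Fin n → ℕ, IsPFHS a row num →
      ((∀ c : Fin n, ¬(MoveableUp row num c ∨ MoveableDown a row num c)) ↔
        ((∀ c : Fin n, row c = a (n - (c : ℕ))) ∧
          ∀ i, ∀ h1 : 1 ≤ i, ∀ h2 : i ≤ n - 1,
            (i ∈ S ↔ num ⟨n - i - 1, by omega⟩ < num ⟨n - i, by omega⟩)))) ∧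
    Nat.card {H : (Fin n → ℕ) × (Fin n → ℕ) //
        IsPFHS a H.1 H.2 ∧ ∀ c : Fin n, ¬(MoveableUp H.1 H.2 c ∨ MoveableDown a H.1 H.2 c)}
      = betaN n S ∧
    (∀ row num : Fin n → ℕ, IsPFHS a row num →
      (∀ c : Fin n, ¬(MoveableUp row num c ∨ MoveableDown a row num c)) →
      sCells a row = (∑ i ∈ Finset.Icc 1 n, a i) - n) := by
  refine ⟨part1 hn hpos hmono hodd S hSdef, part2 hn hpos hmono hodd S hSdef, ?_⟩
  intro row num hP hnomove
  exact part3 hn hpos hmono row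
    ((part1 hn hpos hmono hodd S hSdef row num hP).mp hnomove).1
end
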